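/- Let ≥_* be a reflexive, transitive relation on 𝔉(Ω) satisfying axioms (i)–(iii). Then ≥_* may be represented by some P ∈ Prob(Ω) if and only if (a) ≥_* satisfies the robustness property: f + ε >_* 0 for all ε > 0 implies f ≥_* 0, and (b) there exists ρ ∈ Π(B(Ω)) with market power 𝓂(ρ) < 1. -/

import Mathlib

open Set Filter

/-- A reflexive and transitive binary relation `≥_*` on real valued functions on `Ω`
satisfying the rationality axioms (i)-(iii) of the paper. -/
structure Rationality (Ω : Type*) where
  ge : (Ω → ℝ) → (Ω → ℝ) → Prop
  refl : ∀ f, ge f f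
  trans : ∀ f g h, ge f g → ge g h → ge f h
  /-- axiom (i), first part : `1 >_* 0`. -/
  one_gt_zero : ge 1 0 ∧ ¬ ge 0 1
  /-- axiom (i), second part : pointwise domination implies `≥_*`. -/
  ge_of_le : ∀ f g : Ω → ℝ, (∀ ω, g ω ≤ f ω) → ge f g
  /-- axiom (ii) : `f ≥_* g` implies `b f + h ≥_* b g + h` for bounded `b ≥ 0`. -/
  affine : ∀ f g b h : Ω → ℝ, ge f g → (∀ ω, 0 ≤ b ω) → (∃ c : ℝ, ∀ ω, b ω ≤ c) →
    ge (fun ω => b ω * f ω + h ω) (fun ω => b ω * g ω + h ω)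
  /-- axiom (iii) : `f >_* 0` implies `f ∧ 1 >_* 0`. -/
  trunc : ∀ f : Ω → ℝ, ge f 0 → ¬ ge 0 f →
    ge (fun ω => min (f ω) 1) 0 ∧ ¬ ge 0 (fun ω => min (f ω) 1)

/-- The asymmetric (strict) part `>_*` of `≥_*`. -/
def Rationality.gt {Ω : Type*} (R : Rationality Ω) (f g : Ω → ℝ) : Prop :=
  R.ge f g ∧ ¬ R.ge g f

/-- A set `A ⊆ Ω` is negligible when `0 ≥_* 1_A`. -/
def Rationality.Negligible {Ω : Type*} (R : Rationality Ω) (A : Set Ω) : Prop :=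
  R.ge 0 (A.indicator fun _ => (1 : ℝ))

/-- `𝒳` is a market : a convex set of functions containing `0` and `1`, whose elements are
`≥_*`-bounded below by constants and which is stable under addition of nonnegative constants. -/
structure IsMarket {Ω : Type*} (R : Rationality Ω) (X : Set (Ω → ℝ)) : Prop where
  convex : ∀ f ∈ X, ∀ g ∈ X, ∀ t : ℝ, 0 ≤ t → t ≤ 1 →
    (fun ω => t * f ω + (1 - t) * g ω) ∈ X
  zero_mem : (0 : Ω → ℝ) ∈ X
  one_mem : (1 : Ω → ℝ) ∈ X
  bddBelow : ∀ f ∈ X, ∃ a : ℝ, R.ge f (fun _ => a)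
  add_nonneg_const : ∀ f ∈ X, ∀ lam : ℝ, 0 ≤ lam → (fun ω => f ω + lam) ∈ X

/-- `π ∈ Π₀(𝒳)` : positively homogeneous, subadditive, normalized and `≥_*`-monotone on `X`. -/
structure IsPriceFun0 {Ω : Type*} (R : Rationality Ω) (X : Set (Ω → ℝ))
    (π : (Ω → ℝ) → ℝ) : Prop where
  posHom : ∀ f ∈ X, ∀ lam : ℝ, 0 < lam → (fun ω => lam * f ω) ∈ X →
    π (fun ω => lam * f ω) = lam * π f
  subadd : ∀ f ∈ X, ∀ g ∈ X, (fun ω => f ω + g ω) ∈ X →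
    π (fun ω => f ω + g ω) ≤ π f + π g
  norm_one : π 1 = 1
  mono : ∀ f ∈ X, ∀ g ∈ X, R.ge f g → π g ≤ π f

/-- `π ∈ Π(𝒳)` : a price function, i.e. an element of `Π₀(𝒳)` free of arbitrage. -/
structure IsPriceFun {Ω : Type*} (R : Rationality Ω) (X : Set (Ω → ℝ))
    (π : (Ω → ℝ) → ℝ) extends IsPriceFun0 R X π : Prop where
  arbFree : ∀ f ∈ X, R.gt f 0 → 0 < π f

/-- Cash additivity of a price `π` on the set `X`. -/
def CashAdditive {Ω : Type*} (X : Set (Ω → ℝ)) (π : (Ω → ℝ) → ℝ) : Prop :=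
  ∀ f ∈ X, ∀ a : ℝ, (fun ω => f ω + a) ∈ X → π (fun ω => f ω + a) = π f + a

/-- The cash additive part `π^a` of `π` : `π^a(f) = inf {π(f + t) - t : t ∈ ℝ, f + t ∈ X}`. -/
noncomputable def cashPart {Ω : Type*} (X : Set (Ω → ℝ)) (π : (Ω → ℝ) → ℝ)
    (f : Ω → ℝ) : ℝ :=
  sInf {y | ∃ t : ℝ, (fun ω => f ω + t) ∈ X ∧ y = π (fun ω => f ω + t) - t}

/-- `L(𝒳)` : the superhedgeable claims `{g : λ X ≥_* |g| for some λ > 0, X ∈ 𝒳}`. -/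
def Lspan {Ω : Type*} (R : Rationality Ω) (X : Set (Ω → ℝ)) : Set (Ω → ℝ) :=
  {g | ∃ lam : ℝ, 0 < lam ∧ ∃ f ∈ X, R.ge (fun ω => lam * f ω) (fun ω => |g ω|)}

/-- `𝒞(π) = {g : λ[X - π(X)] ≥_* g for some λ > 0, X ∈ 𝒳}`. -/
def Cpi {Ω : Type*} (R : Rationality Ω) (X : Set (Ω → ℝ)) (π : (Ω → ℝ) → ℝ) :
    Set (Ω → ℝ) :=
  {g | ∃ lam : ℝ, 0 < lam ∧ ∃ f ∈ X, R.ge (fun ω => lam * (f ω - π f)) g}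

/-- Closure in the topology of uniform distance on `𝔉(Ω)`. -/
def uClosure {Ω : Type*} (A : Set (Ω → ℝ)) : Set (Ω → ℝ) :=
  {g | ∀ ε : ℝ, 0 < ε → ∃ h ∈ A, ∀ ω, |g ω - h ω| ≤ ε}

/-- A finitely additive probability defined on the power set of `Ω`. -/
structure FinAddProb (Ω : Type*) where
  meas : Set Ω → ℝ
  nonneg : ∀ A, 0 ≤ meas A
  total : meas Set.univ = 1
  additive : ∀ A B, Disjoint A B → meas (A ∪ B) = meas A + meas B

/-- Countable additivity of a finitely additive probability. -/
def FinAddProb.CountablyAdditive {Ω : Type*} (m : FinAddProb Ω) : Prop :=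
  ∀ A : ℕ → Set Ω, (Pairwise fun i j => Disjoint (A i) (A j)) →
    HasSum (fun n => m.meas (A n)) (m.meas (⋃ n, A n))

/-- Upper tail `∫_0^∞ m(f > t) dt` (with values in `ℝ≥0∞`), used to define the
finitely additive integral. -/
noncomputable def posTail {Ω : Type*} (m : FinAddProb Ω) (f : Ω → ℝ) : ENNReal :=
  ∫⁻ t in Set.Ioi (0 : ℝ), ENNReal.ofReal (m.meas {ω | t < f ω})

/-- `f ∈ L¹(m)` : both tail integrals are finite. -/
def MemL1 {Ω : Type*} (m : FinAddProb Ω) (f : Ω → ℝ) : Prop :=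
  posTail m f ≠ ⊤ ∧ posTail m (fun ω => - f ω) ≠ ⊤

/-- The integral `∫ f dm` with respect to a finitely additive probability. -/
noncomputable def faIntegral {Ω : Type*} (m : FinAddProb Ω) (f : Ω → ℝ) : ℝ :=
  (posTail m f).toReal - (posTail m (fun ω => - f ω)).toReal

/-- Closure of `A` with respect to the `L¹(m)` distance. -/
def L1Closure {Ω : Type*} (m : FinAddProb Ω) (A : Set (Ω → ℝ)) : Set (Ω → ℝ) :=
  {g | ∀ ε : ℝ, 0 < ε → ∃ h ∈ A, MemL1 m (fun ω => g ω - h ω) ∧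
    faIntegral m (fun ω => |g ω - h ω|) ≤ ε}

/-- The set `M₀(π)` of pricing measures. -/
def M0 {Ω : Type*} (R : Rationality Ω) (X : Set (Ω → ℝ)) (π : (Ω → ℝ) → ℝ) :
    Set (FinAddProb Ω) :=
  {m | (∀ g ∈ Lspan R X, MemL1 m g) ∧ ∀ f ∈ X, faIntegral m f ≤ π f}

/-- The set `M(π)` of strictly positive pricing measures :
those `m ∈ M₀(π)` with `∫ (f ∧ 1) dm > 0` whenever `f >_* 0`. -/
def Mstrict {Ω : Type*} (R : Rationality Ω) (X : Set (Ω → ℝ)) (π : (Ω → ℝ) → ℝ) :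
    Set (FinAddProb Ω) :=
  {m | m ∈ M0 R X π ∧ ∀ f : Ω → ℝ, R.gt f 0 → 0 < faIntegral m (fun ω => min (f ω) 1)}

/-- The set `M(π; Y)` : elements of `M₀(π)` with `∫ (f ∧ 1) dm > 0` for `f ∈ Y`, `f >_* 0`. -/
def MstrictOn {Ω : Type*} (R : Rationality Ω) (X : Set (Ω → ℝ)) (π : (Ω → ℝ) → ℝ)
    (Y : Set (Ω → ℝ)) : Set (FinAddProb Ω) :=
  {m | m ∈ M0 R X π ∧ ∀ f ∈ Y, R.gt f 0 → 0 < faIntegral m (fun ω => min (f ω) 1)}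

/-- `𝒳₁ = {X ∧ k : X ∈ 𝒳, k ∈ ℝ₊ ∪ {+∞}}` (`k = +∞` yielding `X` itself). -/
def X1 {Ω : Type*} (X : Set (Ω → ℝ)) : Set (Ω → ℝ) :=
  {g | ∃ f ∈ X, g = f ∨ ∃ k : ℝ, 0 ≤ k ∧ g = fun ω => min (f ω) k}

/-- The market power `𝓂(ρ)` : the supremum of
`[Σ ρ(fᵢ) - ρ(Σ fᵢ)] / Σ ρ(fᵢ)` over finite families of nonnegative bounded functions
(with the convention `0/0 = 0`, automatic in Lean). -/
noncomputable def marketPower {Ω : Type*} (ρ : (Ω → ℝ) → ℝ) : ℝ :=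
  sSup {r | ∃ (N : ℕ) (f : Fin N → Ω → ℝ),
    (∀ i, ∀ ω, 0 ≤ f i ω) ∧ (∀ i, ∃ c : ℝ, ∀ ω, f i ω ≤ c) ∧
    r = ((∑ i, ρ (f i)) - ρ (fun ω => ∑ i, f i ω)) / (∑ i, ρ (f i))}

/-- The relative market power `𝓂(ρ; Y)`, the supremum being restricted to finite families
of nonnegative bounded functions belonging to `Y`. -/
noncomputable def marketPowerOn {Ω : Type*} (Y : Set (Ω → ℝ)) (ρ : (Ω → ℝ) → ℝ) : ℝ :=
  sSup {r | ∃ (N : ℕ) (f : Fin N → Ω → ℝ), (∀ i, f i ∈ Y) ∧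
    (∀ i, ∀ ω, 0 ≤ f i ω) ∧ (∀ i, ∃ c : ℝ, ∀ ω, f i ω ≤ c) ∧
    r = ((∑ i, ρ (f i)) - ρ (fun ω => ∑ i, f i ω)) / (∑ i, ρ (f i))}

/-- A sequence of nonnegative bounded functions whose sum is bounded. -/
def GoodSeq {Ω : Type*} (f : ℕ → Ω → ℝ) : Prop :=
  (∀ n, ∀ ω, 0 ≤ f n ω) ∧ (∀ n, ∃ c : ℝ, ∀ ω, f n ω ≤ c) ∧
  (∃ c : ℝ, ∀ ω, ∀ k : ℕ, (∑ n ∈ Finset.range k, f n ω) ≤ c)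

/-- The pointwise sum `Σₙ fₙ`. -/
noncomputable def seqSum {Ω : Type*} (f : ℕ → Ω → ℝ) : Ω → ℝ :=
  fun ω => ∑' n, f n ω

/-- The ratio `[Σ_{n ≤ k} ρ(fₙ) - ρ(Σₙ fₙ)] / Σ_{n ≤ k} ρ(fₙ)`. -/
noncomputable def mcRatioSeq {Ω : Type*} (ρ : (Ω → ℝ) → ℝ) (f : ℕ → Ω → ℝ) (k : ℕ) : ℝ :=
  ((∑ n ∈ Finset.range (k + 1), ρ (f n)) - ρ (seqSum f)) /
    (∑ n ∈ Finset.range (k + 1), ρ (f n))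

/-- `𝓂_c(ρ; f₁, f₂, …)` : the limit as `k → ∞` of the above ratios (as an extended real,
computed as a `limsup`, which coincides with the limit whenever the latter exists). -/
noncomputable def mcVal {Ω : Type*} (ρ : (Ω → ℝ) → ℝ) (f : ℕ → Ω → ℝ) : EReal :=
  Filter.limsup (fun k => ((mcRatioSeq ρ f k : ℝ) : EReal)) Filter.atTop

/-- `𝓂_c(ρ)` : the supremum of `𝓂_c(ρ; f₁, f₂, …)` over all admissible sequences. -/
noncomputable def mcSup {Ω : Type*} (ρ : (Ω → ℝ) → ℝ) : EReal :=
  sSup {v | ∃ f : ℕ → Ω → ℝ, GoodSeq f ∧ v = mcVal ρ f}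

/-- `𝓃_c(ρ)` : minus the infimum of `𝓂_c(ρ; f₁, f₂, …)` over all admissible sequences. -/
noncomputable def ncVal {Ω : Type*} (ρ : (Ω → ℝ) → ℝ) : EReal :=
  - sInf {v | ∃ f : ℕ → Ω → ℝ, GoodSeq f ∧ v = mcVal ρ f}

/-- The set `B(Ω)` of bounded functions. -/
def BddFun (Ω : Type*) : Set (Ω → ℝ) :=
  {f | ∃ c : ℝ, ∀ ω, |f ω| ≤ c}

/-- `P` represents `≥_*` : `f ≥_* h` iff `inf_{ε > 0} P(f > h - ε) = 1`. -/
def Represents {Ω : Type*} (P : FinAddProb Ω) (R : Rationality Ω) : Prop :=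
  ∀ f h : Ω → ℝ,
    R.ge f h ↔ sInf {x | ∃ ε : ℝ, 0 < ε ∧ x = P.meas {ω | h ω - ε < f ω}} = 1

/-- The robustness property (4d) : `f + ε >_* 0` for all `ε > 0` implies `f ≥_* 0`. -/
def Robust {Ω : Type*} (R : Rationality Ω) : Prop :=
  ∀ f : Ω → ℝ, (∀ ε : ℝ, 0 < ε → R.gt (fun ω => f ω + ε) 0) → R.ge f 0

section Part1
open Set

/-- list sum to `Fin` sum. -/
theorem list_sum_map_get {α M : Type*} [AddCommMonoid M] (l : List α) (g : α → M) :
    (l.map g).sum = ∑ i : Fin l.length, g (l.get i) := by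
  induction l with
  | nil => simp
  | cons a t ih =>
    rw [List.map_cons, List.sum_cons, ih]
    exact (Fin.sum_univ_succ (fun i : Fin (t.length+1) => g ((a :: t).get i))).symm

namespace FinAddProb

variable {Ω : Type*} (P : FinAddProb Ω)

theorem measEmpty : P.meas ∅ = 0 := by
  have h := P.additive ∅ ∅ (by simp)
  simp only [Set.union_empty] at h
  linarith

theorem inter_add_diff (A B : Set Ω) : P.meas (B ∩ A) + P.meas (B \ A) = P.meas B := by
  have hd : Disjoint (B ∩ A) (B \ A) := by
    rw [Set.disjoint_left]
    rintro x ⟨-, hx⟩ ⟨-, hx2⟩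
    exact hx2 hx
  have h := P.additive _ _ hd
  rw [Set.inter_union_diff] at h
  linarith

theorem measMono {A B : Set Ω} (h : A ⊆ B) : P.meas A ≤ P.meas B := by
  have h1 := P.inter_add_diff A B
  rw [Set.inter_eq_self_of_subset_right h] at h1
  have := P.nonneg (B \ A)
  linarith

theorem measLeOne (A : Set Ω) : P.meas A ≤ 1 := by
  have := P.measMono (Set.subset_univ A)
  rw [P.total] at this
  exact this

theorem measCompl (A : Set Ω) : P.meas Aᶜ = 1 - P.meas A := by
  have h := P.additive A Aᶜ disjoint_compl_right
  rw [Set.union_compl_self, P.total] at h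
  linarith

end FinAddProb

/-- shorthand for the indicator. -/
noncomputable def ind {Ω : Type*} (A : Set Ω) : Ω → ℝ := A.indicator fun _ => (1 : ℝ)

theorem ind_nonneg {Ω : Type*} (A : Set Ω) (ω : Ω) : 0 ≤ ind A ω := by
  unfold ind; by_cases h : ω ∈ A <;> simp [h]

theorem ind_le_one {Ω : Type*} (A : Set Ω) (ω : Ω) : ind A ω ≤ 1 := by
  unfold ind; by_cases h : ω ∈ A <;> simp [h]

@[simp] theorem ind_apply {Ω : Type*} (A : Set Ω) (ω : Ω) :
    A.indicator (fun _ => (1:ℝ)) ω = ind A ω := rfl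

theorem ind_of_mem {Ω : Type*} {A : Set Ω} {ω : Ω} (h : ω ∈ A) : ind A ω = 1 :=
  Set.indicator_of_mem h _

theorem ind_of_not_mem {Ω : Type*} {A : Set Ω} {ω : Ω} (h : ω ∉ A) : ind A ω = 0 :=
  Set.indicator_of_notMem h _

namespace Rationality

variable {Ω : Type*} (R : Rationality Ω)

theorem neg_def {A : Set Ω} : R.Negligible A ↔ R.ge 0 (ind A) := Iff.rfl

theorem ge_congr {f f' g g' : Ω → ℝ} (hf : ∀ ω, f ω = f' ω) (hg : ∀ ω, g ω = g' ω)
    (h : R.ge f g) : R.ge f' g' := by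
  have h1 : f = f' := funext hf
  have h2 : g = g' := funext hg
  rwa [h1, h2] at h

theorem ge_add {f g : Ω → ℝ} (h : R.ge f g) (k : Ω → ℝ) :
    R.ge (fun ω => f ω + k ω) (fun ω => g ω + k ω) := by
  have := R.affine f g (fun _ => 1) k h (fun _ => zero_le_one) ⟨1, fun _ => le_rfl⟩
  exact R.ge_congr (fun ω => by simp) (fun ω => by simp) this

theorem ge_smul {f g : Ω → ℝ} (c : ℝ) (hc : 0 ≤ c) (h : R.ge f g) :
    R.ge (fun ω => c * f ω) (fun ω => c * g ω) := by
  have := R.affine f g (fun _ => c) 0 h (fun _ => hc) ⟨c, fun _ => le_rfl⟩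
  exact R.ge_congr (fun ω => by simp) (fun ω => by simp) this

theorem neg_mono {A B : Set Ω} (h : R.Negligible B) (hAB : A ⊆ B) : R.Negligible A := by
  refine R.trans _ (ind B) _ h (R.ge_of_le _ _ ?_)
  intro ω
  exact Set.indicator_le_indicator_of_subset hAB (fun _ => zero_le_one) ω

theorem neg_union {A B : Set Ω} (hA : R.Negligible A) (hB : R.Negligible B) :
    R.Negligible (A ∪ B) := by
  have h1 := R.ge_add hB (ind A)
  have h2 : R.ge 0 (fun ω => ind B ω + ind A ω) :=
    R.trans _ _ _ hA (R.ge_congr (fun ω => by simp) (fun ω => rfl) h1)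
  refine R.trans _ _ _ h2 (R.ge_of_le _ _ ?_)
  intro ω
  show ind (A ∪ B) ω ≤ ind B ω + ind A ω
  unfold ind
  by_cases h : ω ∈ A <;> by_cases h' : ω ∈ B <;>
    simp [h, h', Set.indicator_of_mem, Set.indicator_of_notMem]

theorem not_neg_univ : ¬ R.Negligible (univ : Set Ω) := by
  intro h
  exact R.one_gt_zero.2 (R.ge_congr (fun _ => rfl) (fun ω => by simp [ind]) h)

theorem neg_absorb {A : Set Ω} (hA : R.Negligible A) (φ : Ω → ℝ) (hφ0 : ∀ ω, 0 ≤ φ ω)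
    (hsupp : ∀ ω, ω ∉ A → φ ω = 0) : R.ge 0 φ := by
  by_cases h : R.ge 0 φ
  · exact h
  · exfalso
    have h1 : R.ge φ 0 := R.ge_of_le _ _ (by intro ω; simpa using hφ0 ω)
    obtain ⟨-, h3⟩ := R.trunc φ h1 h
    apply h3
    refine R.trans _ (ind A) _ hA (R.ge_of_le _ _ ?_)
    intro ω
    by_cases hω : ω ∈ A
    · simp only [ind, Set.indicator_of_mem hω]
      exact min_le_right _ _
    · simp [ind, Set.indicator_of_notMem hω, hsupp ω hω]

theorem neg_of_ge {f h : Ω → ℝ} (hge : R.ge f h) {ε : ℝ} (hε : 0 < ε) :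
    R.Negligible {ω | f ω ≤ h ω - ε} := by
  set A := {ω | f ω ≤ h ω - ε} with hA
  have hb0 : ∀ ω, 0 ≤ ind A ω := ind_nonneg A
  have hbb : ∃ c : ℝ, ∀ ω, ind A ω ≤ c := ⟨1, ind_le_one A⟩
  have h1 := R.affine f h (ind A) (fun ω => -(ind A ω * f ω)) hge hb0 hbb
  have h2 : R.ge 0 (fun ω => ind A ω * (h ω - f ω)) :=
    R.ge_congr (fun ω => by simp) (fun ω => by ring) h1
  have h3 : R.ge (fun ω => ind A ω * (h ω - f ω)) (fun ω => ε * ind A ω) := by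
    refine R.ge_of_le _ _ ?_
    intro ω
    by_cases hω : ω ∈ A
    · have : f ω ≤ h ω - ε := hω
      simp only [ind, Set.indicator_of_mem hω]
      nlinarith
    · simp [ind, Set.indicator_of_notMem hω]
  have h4 := R.trans _ _ _ h2 h3
  have h5 := R.ge_smul ε⁻¹ (by positivity) h4
  refine R.ge_congr (fun ω => by simp) (fun ω => ?_) h5
  show ε⁻¹ * (ε * ind A ω) = A.indicator (fun _ => 1) ω
  rw [show ε⁻¹ * (ε * ind A ω) = (ε⁻¹ * ε) * ind A ω by ring, inv_mul_cancel₀ (ne_of_gt hε),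
    one_mul]
  rfl

end Rationality
end Part1
section Part2
open Set

namespace Rationality

variable {Ω : Type*} (R : Rationality Ω)

theorem ge_of_neg {f h : Ω → ℝ} (hR : Robust R)
    (hneg : ∀ ε : ℝ, 0 < ε → R.Negligible {ω | f ω ≤ h ω - ε}) : R.ge f h := by
  have key : R.ge (fun ω => f ω - h ω) 0 := by
    apply hR
    intro ε hε
    have hA : R.Negligible {ω | f ω ≤ h ω - ε/2} := hneg _ (by positivity)
    set A := {ω | f ω ≤ h ω - ε/2} with hAdef
    constructor
    · -- `f - h + ε ≥_* 0`
      set u : Ω → ℝ := fun ω => max (-(f ω - h ω + ε)) 0 with hu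
      have hu0 : R.ge 0 u := by
        refine R.neg_absorb hA u (fun ω => le_max_right _ _) ?_
        intro ω hω
        have : ¬ (f ω ≤ h ω - ε/2) := hω
        have h2 : -(f ω - h ω + ε) ≤ 0 := by push_neg at this; linarith
        show max (-(f ω - h ω + ε)) 0 = 0
        exact max_eq_right h2
      have h1 := R.ge_add hu0 (fun ω => f ω - h ω + ε)
      have h2 : R.ge (fun ω => (fun ω => f ω - h ω) ω + ε) (fun ω => u ω + (f ω - h ω + ε)) :=
        R.ge_congr (fun ω => by simp) (fun ω => rfl) h1
      refine R.trans _ _ _ h2 (R.ge_of_le _ _ ?_)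
      intro ω
      have hle := le_max_left (-(f ω - h ω + ε)) 0
      simp only [hu, Pi.zero_apply]
      linarith
    · -- strict part
      intro hcon
      have hb0 : ∀ ω, 0 ≤ ind Aᶜ ω := ind_nonneg _
      have hbb : ∃ c : ℝ, ∀ ω, ind Aᶜ ω ≤ c := ⟨1, ind_le_one _⟩
      have h1 := R.affine _ _ (ind Aᶜ) 0 hcon hb0 hbb
      have h2 : R.ge 0 (fun ω => ind Aᶜ ω * (f ω - h ω + ε)) :=
        R.ge_congr (fun ω => by simp) (fun ω => by simp) h1
      have h3 : R.ge (fun ω => ind Aᶜ ω * (f ω - h ω + ε)) (fun ω => (ε/2) * ind Aᶜ ω) := by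
        refine R.ge_of_le _ _ ?_
        intro ω
        by_cases hω : ω ∈ Aᶜ
        · have : ¬ (f ω ≤ h ω - ε/2) := hω
          push_neg at this
          simp only [ind, Set.indicator_of_mem hω]
          nlinarith
        · simp [ind, Set.indicator_of_notMem hω]
      have h4 := R.trans _ _ _ h2 h3
      have h5 := R.ge_smul (ε/2)⁻¹ (by positivity) h4
      have h6 : R.Negligible Aᶜ := by
        refine R.ge_congr (fun ω => by simp) (fun ω => ?_) h5
        show (ε/2)⁻¹ * (ε/2 * ind Aᶜ ω) = Aᶜ.indicator (fun _ => 1) ω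
        rw [show (ε/2)⁻¹ * (ε/2 * ind Aᶜ ω) = ((ε/2)⁻¹ * (ε/2)) * ind Aᶜ ω by ring,
          inv_mul_cancel₀ (by positivity), one_mul]
        rfl
      have h7 := R.neg_union hA h6
      rw [Set.union_compl_self] at h7
      exact R.not_neg_univ h7
  have h8 := R.ge_add key h
  exact R.ge_congr (fun ω => by simp) (fun ω => by simp) h8

/-- The bridge lemma : `f ≥_* h` iff all the sets `{f ≤ h - ε}` are negligible. -/
theorem ge_iff_neg (hR : Robust R) (f h : Ω → ℝ) :
    R.ge f h ↔ ∀ ε : ℝ, 0 < ε → R.Negligible {ω | f ω ≤ h ω - ε} :=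
  ⟨fun hge ε hε => R.neg_of_ge hge hε, fun hn => R.ge_of_neg hR hn⟩

end Rationality
end Part2
section Part3
open Set

variable {Ω : Type*}

/-- value of a "cover" given by a list of weighted sets. -/
noncomputable def coverVal (P : FinAddProb Ω) (l : List (ℝ × Set Ω)) : ℝ :=
  (l.map fun p => p.1 * P.meas p.2).sum

/-- the function associated with a weighted list of sets. -/
noncomputable def coverFun (l : List (ℝ × Set Ω)) : Ω → ℝ :=
  fun ω => (l.map fun p => p.1 * ind p.2 ω).sum

theorem coverFun_nil (ω : Ω) : coverFun ([] : List (ℝ × Set Ω)) ω = 0 := rfl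

theorem coverFun_cons (p : ℝ × Set Ω) (l : List (ℝ × Set Ω)) (ω : Ω) :
    coverFun (p :: l) ω = p.1 * ind p.2 ω + coverFun l ω := by
  simp [coverFun]

theorem coverFun_append (l₁ l₂ : List (ℝ × Set Ω)) (ω : Ω) :
    coverFun (l₁ ++ l₂) ω = coverFun l₁ ω + coverFun l₂ ω := by
  simp [coverFun]

theorem coverVal_append (P : FinAddProb Ω) (l₁ l₂ : List (ℝ × Set Ω)) :
    coverVal P (l₁ ++ l₂) = coverVal P l₁ + coverVal P l₂ := by
  simp [coverVal]

theorem coverFun_smul (t : ℝ) (l : List (ℝ × Set Ω)) (ω : Ω) :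
    coverFun (l.map fun p => (t * p.1, p.2)) ω = t * coverFun l ω := by
  induction l with
  | nil => simp [coverFun]
  | cons p l ih =>
    rw [List.map_cons, coverFun_cons, coverFun_cons, ih]
    ring

theorem coverVal_smul (P : FinAddProb Ω) (t : ℝ) (l : List (ℝ × Set Ω)) :
    coverVal P (l.map fun p => (t * p.1, p.2)) = t * coverVal P l := by
  induction l with
  | nil => simp [coverVal]
  | cons p l ih =>
    simp only [coverVal, List.map_cons, List.sum_cons] at ih ⊢
    rw [ih]
    ring

/-- Key "partition" lemma : a list whose function dominates `m` on `B` has relative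
value at least `m * P(B)`. -/
theorem coverVal_inter_ge (P : FinAddProb Ω) (l : List (ℝ × Set Ω)) :
    ∀ (B : Set Ω) (m : ℝ), (∀ ω ∈ B, m ≤ coverFun l ω) →
    m * P.meas B ≤ (l.map fun p => p.1 * P.meas (p.2 ∩ B)).sum := by
  induction l with
  | nil =>
    intro B m h
    simp only [List.map_nil, List.sum_nil]
    rcases Set.eq_empty_or_nonempty B with hB | ⟨ω, hω⟩
    · rw [hB, P.measEmpty, mul_zero]
    · have h1 := h ω hω
      rw [coverFun_nil] at h1
      exact mul_nonpos_of_nonpos_of_nonneg h1 (P.nonneg B)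
  | cons p t ih =>
    intro B m h
    obtain ⟨c, A⟩ := p
    have h1 : (m - c) * P.meas (B ∩ A) ≤ (t.map fun p => p.1 * P.meas (p.2 ∩ (B ∩ A))).sum := by
      refine ih (B ∩ A) (m - c) ?_
      rintro ω ⟨hωB, hωA⟩
      have := h ω hωB
      rw [coverFun_cons] at this
      simp only [ind, Set.indicator_of_mem hωA] at this
      linarith
    have h2 : m * P.meas (B \ A) ≤ (t.map fun p => p.1 * P.meas (p.2 ∩ (B \ A))).sum := by
      refine ih (B \ A) m ?_
      rintro ω ⟨hωB, hωA⟩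
      have := h ω hωB
      rw [coverFun_cons] at this
      simp only [ind, Set.indicator_of_notMem hωA] at this
      linarith
    have hsplit : (t.map fun p => p.1 * P.meas (p.2 ∩ B)).sum =
        (t.map fun p => p.1 * P.meas (p.2 ∩ (B ∩ A))).sum +
        (t.map fun p => p.1 * P.meas (p.2 ∩ (B \ A))).sum := by
      rw [← List.sum_map_add]
      refine congrArg List.sum (List.map_congr_left ?_)
      intro p _
      have := P.inter_add_diff A (p.2 ∩ B)
      rw [Set.inter_assoc] at this
      rw [Set.inter_diff_assoc] at this
      rw [← this]
      ring
    have hB : P.meas (B ∩ A) + P.meas (B \ A) = P.meas B := P.inter_add_diff A B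
    have hhead : P.meas (A ∩ B) = P.meas (B ∩ A) := by rw [Set.inter_comm]
    simp only [List.map_cons, List.sum_cons]
    rw [hsplit, hhead]
    have e1 : (m - c) * P.meas (B ∩ A) = m * P.meas (B ∩ A) - c * P.meas (B ∩ A) := by ring
    have e2 : m * P.meas B = m * P.meas (B ∩ A) + m * P.meas (B \ A) := by rw [← hB]; ring
    linarith

theorem coverVal_ge (P : FinAddProb Ω) (l : List (ℝ × Set Ω)) (m : ℝ)
    (h : ∀ ω, m ≤ coverFun l ω) : m ≤ coverVal P l := by
  have h1 := coverVal_inter_ge P l Set.univ m (fun ω _ => h ω)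
  rw [P.total, mul_one] at h1
  refine h1.trans (le_of_eq ?_)
  unfold coverVal
  refine congrArg List.sum (List.map_congr_left ?_)
  intro p _
  rw [Set.inter_univ]

/-- the outer finitely additive price of `f`. -/
noncomputable def pCover (P : FinAddProb Ω) (f : Ω → ℝ) : ℝ :=
  sInf {y | ∃ l : List (ℝ × Set Ω), (∀ ω, f ω ≤ coverFun l ω) ∧ y = coverVal P l}

theorem pCover_set_nonempty (P : FinAddProb Ω) {f : Ω → ℝ} {c : ℝ} (hf : ∀ ω, f ω ≤ c) :
    Set.Nonempty {y | ∃ l : List (ℝ × Set Ω), (∀ ω, f ω ≤ coverFun l ω) ∧ y = coverVal P l} := by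
  refine ⟨coverVal P [(c, Set.univ)], [(c, Set.univ)], ?_, rfl⟩
  intro ω
  rw [coverFun_cons, coverFun_nil]
  simp [ind]
  exact hf ω

theorem pCover_set_bddBelow (P : FinAddProb Ω) {f : Ω → ℝ} {c : ℝ} (hf : ∀ ω, -c ≤ f ω) :
    BddBelow {y | ∃ l : List (ℝ × Set Ω), (∀ ω, f ω ≤ coverFun l ω) ∧ y = coverVal P l} := by
  refine ⟨-c, ?_⟩
  rintro y ⟨l, hl, rfl⟩
  exact coverVal_ge P l (-c) (fun ω => (hf ω).trans (hl ω))

theorem pCover_le (P : FinAddProb Ω) {f : Ω → ℝ} (hf : f ∈ BddFun Ω)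
    (l : List (ℝ × Set Ω)) (hl : ∀ ω, f ω ≤ coverFun l ω) : pCover P f ≤ coverVal P l := by
  obtain ⟨c, hc⟩ := hf
  exact csInf_le (pCover_set_bddBelow P (fun ω => neg_le_of_abs_le (hc ω)))
    ⟨l, hl, rfl⟩

theorem le_pCover (P : FinAddProb Ω) {f : Ω → ℝ} {c : ℝ} (hfc : ∀ ω, f ω ≤ c)
    (m : ℝ) (hm : ∀ ω, m ≤ f ω) : m ≤ pCover P f := by
  refine le_csInf (pCover_set_nonempty P hfc) ?_
  rintro y ⟨l, hl, rfl⟩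
  exact coverVal_ge P l m (fun ω => (hm ω).trans (hl ω))

theorem pCover_exists_cover (P : FinAddProb Ω) {f : Ω → ℝ} (hf : f ∈ BddFun Ω)
    {δ : ℝ} (hδ : 0 < δ) :
    ∃ l : List (ℝ × Set Ω), (∀ ω, f ω ≤ coverFun l ω) ∧ coverVal P l < pCover P f + δ := by
  obtain ⟨c, hc⟩ := hf
  have hne := pCover_set_nonempty P (fun ω => le_of_abs_le (hc ω))
  have hbdd := pCover_set_bddBelow P (fun ω => neg_le_of_abs_le (hc ω))
  have : pCover P f < pCover P f + δ := by linarith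
  obtain ⟨y, ⟨l, hl, rfl⟩, hy⟩ := (csInf_lt_iff hbdd hne).mp this
  exact ⟨l, hl, hy⟩

end Part3
section Part4
open Set

variable {Ω : Type*}

theorem list_range_sum (n : ℕ) (f : ℕ → ℝ) :
    ((List.range n).map f).sum = ∑ x ∈ Finset.range n, f x := by
  induction n with
  | zero => simp
  | succ k ih =>
    rw [List.range_succ, List.map_append, List.sum_append, Finset.sum_range_succ, ih]; simp

theorem pCover_subadd (P : FinAddProb Ω) {f g : Ω → ℝ} (hf : f ∈ BddFun Ω)
    (hg : g ∈ BddFun Ω) : pCover P (fun ω => f ω + g ω) ≤ pCover P f + pCover P g := by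
  refine le_of_forall_pos_le_add ?_
  intro δ hδ
  obtain ⟨l₁, hl₁, hv₁⟩ := pCover_exists_cover P hf (half_pos hδ)
  obtain ⟨l₂, hl₂, hv₂⟩ := pCover_exists_cover P hg (half_pos hδ)
  have hcov : ∀ ω, f ω + g ω ≤ coverFun (l₁ ++ l₂) ω := by
    intro ω
    rw [coverFun_append]
    exact add_le_add (hl₁ ω) (hl₂ ω)
  have hfg : (fun ω => f ω + g ω) ∈ BddFun Ω := by
    obtain ⟨c₁, hc₁⟩ := hf; obtain ⟨c₂, hc₂⟩ := hg
    exact ⟨c₁ + c₂, fun ω => (abs_add_le _ _).trans (add_le_add (hc₁ ω) (hc₂ ω))⟩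
  calc pCover P (fun ω => f ω + g ω) ≤ coverVal P (l₁ ++ l₂) := pCover_le P hfg _ hcov
    _ = coverVal P l₁ + coverVal P l₂ := coverVal_append P l₁ l₂
    _ ≤ pCover P f + pCover P g + δ := by linarith

theorem BddFun.smul {f : Ω → ℝ} (hf : f ∈ BddFun Ω) (t : ℝ) :
    (fun ω => t * f ω) ∈ BddFun Ω := by
  obtain ⟨c, hc⟩ := hf
  exact ⟨|t| * c, fun ω => by rw [abs_mul]; exact mul_le_mul_of_nonneg_left (hc ω) (abs_nonneg t)⟩

theorem pCover_smul_le (P : FinAddProb Ω) {f : Ω → ℝ} (hf : f ∈ BddFun Ω) {t : ℝ}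
    (ht : 0 < t) : pCover P (fun ω => t * f ω) ≤ t * pCover P f := by
  refine le_of_forall_pos_le_add ?_
  intro δ hδ
  obtain ⟨l, hl, hv⟩ := pCover_exists_cover P hf (div_pos hδ ht)
  have hcov : ∀ ω, t * f ω ≤ coverFun (l.map fun p => (t * p.1, p.2)) ω := by
    intro ω
    rw [coverFun_smul]
    exact mul_le_mul_of_nonneg_left (hl ω) ht.le
  calc pCover P (fun ω => t * f ω) ≤ coverVal P (l.map fun p => (t * p.1, p.2)) :=
        pCover_le P (BddFun.smul hf t) _ hcov
    _ = t * coverVal P l := coverVal_smul P t l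
    _ ≤ t * (pCover P f + δ / t) := by
        refine mul_le_mul_of_nonneg_left ?_ ht.le
        linarith
    _ = t * pCover P f + δ := by field_simp

theorem pCover_smul (P : FinAddProb Ω) {f : Ω → ℝ} (hf : f ∈ BddFun Ω) {t : ℝ}
    (ht : 0 < t) : pCover P (fun ω => t * f ω) = t * pCover P f := by
  refine le_antisymm (pCover_smul_le P hf ht) ?_
  have h2 := pCover_smul_le P (BddFun.smul hf t) (inv_pos.mpr ht)
  have he : (fun ω => t⁻¹ * (t * f ω)) = f := by
    funext ω
    rw [← mul_assoc, inv_mul_cancel₀ (ne_of_gt ht), one_mul]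
  rw [he] at h2
  calc t * pCover P f ≤ t * (t⁻¹ * pCover P (fun ω => t * f ω)) :=
        mul_le_mul_of_nonneg_left h2 ht.le
    _ = pCover P (fun ω => t * f ω) := by
        rw [← mul_assoc, mul_inv_cancel₀ (ne_of_gt ht), one_mul]

theorem pCover_zero (P : FinAddProb Ω) : pCover P (fun _ : Ω => (0:ℝ)) = 0 := by
  refine le_antisymm ?_ ?_
  · refine (pCover_le P ⟨0, fun ω => by simp⟩ [] (fun ω => ?_)).trans ?_
    · rw [coverFun_nil]
    · simp [coverVal]
  · exact le_pCover P (c := 0) (fun ω => le_rfl) 0 (fun ω => le_rfl)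

theorem pCover_const (P : FinAddProb Ω) (a : ℝ) : pCover P (fun _ : Ω => a) = a := by
  refine le_antisymm ?_ (le_pCover P (c := a) (fun ω => le_rfl) a (fun ω => le_rfl))
  have h := pCover_le P (f := fun _ : Ω => a) ⟨|a|, fun ω => le_rfl⟩ [(a, Set.univ)] ?_
  · refine h.trans (le_of_eq ?_)
    simp [coverVal, P.total]
  · intro ω
    rw [coverFun_cons, coverFun_nil]
    simp [ind]

/-- the key approximation estimate : `p(f) + p(-f) ≤ 0`. -/
theorem pCover_add_neg_nonpos (P : FinAddProb Ω) {f : Ω → ℝ} (hf : f ∈ BddFun Ω) :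
    pCover P f + pCover P (fun ω => - f ω) ≤ 0 := by
  refine le_of_forall_pos_le_add ?_
  intro ε hε
  obtain ⟨c, hc⟩ := hf
  set K := ⌈2 * c / ε⌉₊ + 1 with hK
  set F : ℕ → Set Ω := fun k => {ω | (k : ℝ) * ε ≤ f ω + c} with hF
  set l₁ : List (ℝ × Set Ω) := (-c + ε, Set.univ) :: ((List.range K).map fun k => (ε, F (k+1)))
    with hl₁
  set l₂ : List (ℝ × Set Ω) := (c, Set.univ) :: ((List.range K).map fun k => (-ε, F (k+1)))
    with hl₂
  -- the level sum at a point
  have hsum : ∀ ω, ((List.range K).map fun k => ε * ind (F (k+1)) ω).sum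
      = (⌊(f ω + c)/ε⌋₊ : ℝ) * ε := by
    intro ω
    set y := f ω + c with hy
    have hy0 : 0 ≤ y := by have := neg_le_of_abs_le (hc ω); linarith
    set n₀ := ⌊y/ε⌋₊ with hn₀
    have hyc : y ≤ 2 * c := by have := le_of_abs_le (hc ω); linarith
    have hn₀K : n₀ < K := by
      have h1 : n₀ ≤ ⌊2 * c / ε⌋₊ := Nat.floor_le_floor (by gcongr)
      have h2 := Nat.floor_le_ceil (2 * c / ε)
      omega
    have hterm : ∀ k, ε * ind (F (k+1)) ω = if k < n₀ then ε else 0 := by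
      intro k
      have hmem : ω ∈ F (k+1) ↔ ((k+1 : ℕ) : ℝ) * ε ≤ y := Iff.rfl
      by_cases hk : k < n₀
      · have : ((k+1:ℕ):ℝ) ≤ y / ε := by
          rw [← Nat.le_floor_iff (by positivity)]
          omega
        have hω : ω ∈ F (k+1) := by
          rw [hmem]
          calc ((k+1:ℕ):ℝ) * ε ≤ (y/ε) * ε := mul_le_mul_of_nonneg_right this hε.le
            _ = y := by field_simp
        simp [hk, ind, Set.indicator_of_mem hω]
      · have hω : ω ∉ F (k+1) := by
          rw [hmem]
          intro hcon
          have : ((k+1:ℕ):ℝ) ≤ y / ε := by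
            rw [le_div_iff₀ hε]; exact hcon
          rw [← Nat.le_floor_iff (by positivity)] at this
          omega
        simp [hk, ind, Set.indicator_of_notMem hω]
    rw [list_range_sum]
    calc ∑ k ∈ Finset.range K, ε * ind (F (k+1)) ω
        = ∑ k ∈ Finset.range K, (if k < n₀ then ε else 0) :=
          Finset.sum_congr rfl (fun k _ => hterm k)
      _ = ∑ k ∈ (Finset.range K).filter (fun k => k < n₀), ε := (Finset.sum_filter _ _).symm
      _ = ∑ k ∈ Finset.range n₀, ε := by
          congr 1
          ext k; simp only [Finset.mem_filter, Finset.mem_range]; omega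
      _ = (n₀ : ℝ) * ε := by
          rw [Finset.sum_const, Finset.card_range, nsmul_eq_mul]
  have hind : ind (Set.univ : Set Ω) = fun _ : Ω => (1:ℝ) := by
    funext ω; simp [ind]
  have hcf1 : ∀ ω, coverFun ((List.range K).map fun k => ((ε:ℝ), F (k+1))) ω
      = ((List.range K).map fun k => ε * ind (F (k+1)) ω).sum := by
    intro ω
    simp only [coverFun, List.map_map]
    rfl
  have hcf2 : ∀ ω, coverFun ((List.range K).map fun k => ((-ε:ℝ), F (k+1))) ω
      = -(((List.range K).map fun k => ε * ind (F (k+1)) ω).sum) := by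
    intro ω
    simp only [coverFun, List.map_map]
    show ((List.range K).map fun k => (-ε) * ind (F (k+1)) ω).sum = _
    rw [list_range_sum, list_range_sum, ← Finset.sum_neg_distrib]
    exact Finset.sum_congr rfl (fun k _ => by ring)
  have hcov1 : ∀ ω, f ω ≤ coverFun l₁ ω := by
    intro ω
    rw [hl₁, coverFun_cons, hcf1 ω, hsum ω]
    have h1 : f ω + c < ((⌊(f ω + c)/ε⌋₊ : ℝ) + 1) * ε := by
      have h2 := Nat.lt_floor_add_one ((f ω + c)/ε)
      calc f ω + c = ((f ω + c)/ε) * ε := by field_simp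
        _ < ((⌊(f ω + c)/ε⌋₊ : ℝ) + 1) * ε := mul_lt_mul_of_pos_right h2 hε
    have h3 : ((⌊(f ω + c)/ε⌋₊ : ℝ) + 1) * ε = (⌊(f ω + c)/ε⌋₊ : ℝ) * ε + ε := by ring
    rw [hind]
    simp only
    linarith
  have hcov2 : ∀ ω, - f ω ≤ coverFun l₂ ω := by
    intro ω
    rw [hl₂, coverFun_cons, hcf2 ω, hsum ω]
    have hy0 : 0 ≤ (f ω + c) := by have := neg_le_of_abs_le (hc ω); linarith
    have h1 : (⌊(f ω + c)/ε⌋₊ : ℝ) * ε ≤ f ω + c := by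
      have h2 := Nat.floor_le (div_nonneg hy0 hε.le)
      calc (⌊(f ω + c)/ε⌋₊ : ℝ) * ε ≤ ((f ω + c)/ε) * ε := mul_le_mul_of_nonneg_right h2 hε.le
        _ = f ω + c := by field_simp
    rw [hind]
    simp only
    linarith
  have hval : coverVal P l₁ + coverVal P l₂ = ε := by
    rw [hl₁, hl₂]
    simp only [coverVal, List.map_cons, List.sum_cons, List.map_map]
    rw [show ((List.map ((fun p : ℝ × Set Ω => p.1 * P.meas p.2) ∘ fun k => ((ε:ℝ), F (k+1)))
        (List.range K)).sum) = ∑ x ∈ Finset.range K, ε * P.meas (F (x+1)) from list_range_sum K _,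
      show ((List.map ((fun p : ℝ × Set Ω => p.1 * P.meas p.2) ∘ fun k => ((-ε:ℝ), F (k+1)))
        (List.range K)).sum) = ∑ x ∈ Finset.range K, (-ε) * P.meas (F (x+1)) from
        list_range_sum K _, P.total]
    have h4 : ∑ x ∈ Finset.range K, ε * P.meas (F (x+1))
        + ∑ x ∈ Finset.range K, (-ε) * P.meas (F (x+1)) = 0 := by
      rw [← Finset.sum_add_distrib]
      simp
    linarith
  have hbf : (fun ω => - f ω) ∈ BddFun Ω := ⟨c, fun ω => by rw [abs_neg]; exact hc ω⟩
  calc pCover P f + pCover P (fun ω => - f ω)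
      ≤ coverVal P l₁ + coverVal P l₂ :=
        add_le_add (pCover_le P ⟨c, hc⟩ _ hcov1) (pCover_le P hbf _ hcov2)
    _ = ε := hval
    _ = 0 + ε := by ring

end Part4
section Part5
open Set

variable {Ω : Type*}

theorem BddFun.add {f g : Ω → ℝ} (hf : f ∈ BddFun Ω) (hg : g ∈ BddFun Ω) :
    (fun ω => f ω + g ω) ∈ BddFun Ω := by
  obtain ⟨c₁, hc₁⟩ := hf; obtain ⟨c₂, hc₂⟩ := hg
  exact ⟨c₁ + c₂, fun ω => (abs_add_le _ _).trans (add_le_add (hc₁ ω) (hc₂ ω))⟩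

theorem BddFun.neg {f : Ω → ℝ} (hf : f ∈ BddFun Ω) : (fun ω => - f ω) ∈ BddFun Ω := by
  obtain ⟨c, hc⟩ := hf
  exact ⟨c, fun ω => by rw [abs_neg]; exact hc ω⟩

theorem BddFun.finSum (N : ℕ) (f : Fin N → Ω → ℝ) (h : ∀ i, f i ∈ BddFun Ω) :
    (fun ω => ∑ i, f i ω) ∈ BddFun Ω := by
  induction N with
  | zero => exact ⟨0, fun ω => by simp⟩
  | succ n ih =>
    have h1 := ih (fun i => f i.succ) (fun i => h i.succ)
    have h2 := BddFun.add (h 0) h1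
    have he : (fun ω => f 0 ω + ∑ i : Fin n, f i.succ ω) = (fun ω => ∑ i, f i ω) := by
      funext ω; rw [Fin.sum_univ_succ]
    rwa [he] at h2

theorem pCover_add (P : FinAddProb Ω) {f g : Ω → ℝ} (hf : f ∈ BddFun Ω) (hg : g ∈ BddFun Ω) :
    pCover P (fun ω => f ω + g ω) = pCover P f + pCover P g := by
  refine le_antisymm (pCover_subadd P hf hg) ?_
  have h2 := pCover_subadd P (BddFun.add hf hg) (BddFun.neg hg)
  have he : (fun ω => (fun ω => f ω + g ω) ω + (fun ω => - g ω) ω) = f := funext fun ω => by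
    simp
  rw [he] at h2
  have h3 := pCover_add_neg_nonpos P hg
  linarith

theorem pCover_finSum (P : FinAddProb Ω) (N : ℕ) (f : Fin N → Ω → ℝ)
    (h : ∀ i, f i ∈ BddFun Ω) :
    pCover P (fun ω => ∑ i, f i ω) = ∑ i, pCover P (f i) := by
  induction N with
  | zero =>
    have : (fun ω : Ω => ∑ i : Fin 0, f i ω) = (fun _ => (0:ℝ)) := by funext ω; simp
    rw [this, pCover_zero]
    simp
  | succ n ih =>
    have h1 := ih (fun i => f i.succ) (fun i => h i.succ)
    have he : (fun ω => ∑ i, f i ω)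
        = (fun ω => f 0 ω + (fun ω' => ∑ i : Fin n, f i.succ ω') ω) := by
      funext ω; rw [Fin.sum_univ_succ]
    rw [he, pCover_add P (h 0) (BddFun.finSum n _ (fun i => h i.succ)), h1, Fin.sum_univ_succ]

section Forward

variable (R : Rationality Ω) (P : FinAddProb Ω)

theorem rep_sInf_iff (f h : Ω → ℝ) :
    sInf {x | ∃ ε : ℝ, 0 < ε ∧ x = P.meas {ω | h ω - ε < f ω}} = 1 ↔
    ∀ ε : ℝ, 0 < ε → P.meas {ω | h ω - ε < f ω} = 1 := by
  have hbdd : BddBelow {x | ∃ ε : ℝ, 0 < ε ∧ x = P.meas {ω | h ω - ε < f ω}} := by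
    refine ⟨0, ?_⟩
    rintro x ⟨ε, hε, rfl⟩
    exact P.nonneg _
  constructor
  · intro hs ε hε
    have h1 := csInf_le hbdd ⟨ε, hε, rfl⟩
    rw [hs] at h1
    exact le_antisymm (P.measLeOne _) h1
  · intro hall
    refine le_antisymm ?_ ?_
    · refine (csInf_le hbdd ⟨1, one_pos, rfl⟩).trans ?_
      rw [hall 1 one_pos]
    · refine le_csInf ⟨_, 1, one_pos, rfl⟩ ?_
      rintro x ⟨ε, hε, rfl⟩
      rw [hall ε hε]

variable (hrep : Represents P R)
include hrep

theorem rep_null_iff (A : Set Ω) : P.meas A = 0 ↔ R.Negligible A := by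
  have hiff := hrep 0 (ind A)
  constructor
  · intro h0
    show R.ge 0 (A.indicator fun _ => 1)
    refine hiff.mpr ((rep_sInf_iff P 0 (ind A)).mpr ?_)
    intro ε hε
    have hsub : Aᶜ ⊆ {ω | ind A ω - ε < (0:Ω→ℝ) ω} := by
      intro ω hω
      simp only [Set.mem_setOf_eq, Pi.zero_apply, ind_of_not_mem hω]
      linarith
    have h1 := P.measMono hsub
    rw [P.measCompl, h0] at h1
    exact le_antisymm (P.measLeOne _) (by linarith)
  · intro hneg
    have h1 := (rep_sInf_iff P 0 (ind A)).mp (hiff.mp hneg) (1/2) (by norm_num)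
    have hset : {ω | ind A ω - 1/2 < (0:Ω→ℝ) ω} = Aᶜ := by
      ext ω
      by_cases hω : ω ∈ A
      · simp only [Set.mem_setOf_eq, Pi.zero_apply, ind_of_mem hω, Set.mem_compl_iff]
        constructor
        · intro hcon; linarith
        · intro hcon; exact absurd hω hcon
      · simp only [Set.mem_setOf_eq, Pi.zero_apply, ind_of_not_mem hω, Set.mem_compl_iff]
        constructor
        · intro _; exact hω
        · intro _; linarith
    rw [hset, P.measCompl] at h1
    linarith

theorem rep_robust : Robust R := by
  intro f hf
  refine (hrep f 0).mpr ((rep_sInf_iff P f 0).mpr ?_)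
  intro ε hε
  have h1 := (hrep (fun ω => f ω + ε/2) 0).mp (hf (ε/2) (by positivity)).1
  have h2 := (rep_sInf_iff P (fun ω => f ω + ε/2) 0).mp h1 (ε/2) (by positivity)
  have hset : {ω | (0:Ω→ℝ) ω - ε/2 < f ω + ε/2} = {ω | (0:Ω→ℝ) ω - ε < f ω} := by
    ext ω
    simp only [Set.mem_setOf_eq, Pi.zero_apply]
    constructor <;> intro <;> linarith
  rw [hset] at h2
  exact h2

theorem pCover_mono {f g : Ω → ℝ} (hf : f ∈ BddFun Ω) (hg : g ∈ BddFun Ω)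
    (hge : R.ge f g) : pCover P g ≤ pCover P f := by
  obtain ⟨cf, hcf⟩ := hf
  obtain ⟨cg, hcg⟩ := hg
  have key : pCover P (fun ω => g ω - f ω) ≤ 0 := by
    refine le_of_forall_pos_le_add ?_
    intro δ hδ
    have hnull : P.meas {ω | f ω ≤ g ω - δ} = 0 :=
      (rep_null_iff R P hrep _).mpr (R.neg_of_ge hge hδ)
    set l : List (ℝ × Set Ω) := [(δ, Set.univ), (cf + cg, {ω | f ω ≤ g ω - δ})] with hl
    have hcov : ∀ ω, g ω - f ω ≤ coverFun l ω := by
      intro ω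
      rw [hl, coverFun_cons, coverFun_cons, coverFun_nil]
      have hu : ind (Set.univ : Set Ω) ω = 1 := by simp [ind]
      rw [hu]
      by_cases hω : ω ∈ {ω | f ω ≤ g ω - δ}
      · have h1 : f ω ≤ g ω - δ := hω
        rw [ind_of_mem hω]
        show g ω - f ω ≤ δ * 1 + ((cf + cg) * 1 + 0)
        have h3 := neg_le_of_abs_le (hcf ω)
        have h4 := le_of_abs_le (hcg ω)
        linarith
      · have h1 : ¬ (f ω ≤ g ω - δ) := hω
        push_neg at h1
        rw [ind_of_not_mem hω]
        show g ω - f ω ≤ δ * 1 + ((cf + cg) * 0 + 0)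
        linarith
    have hval : coverVal P l = δ := by
      rw [hl]
      simp [coverVal, P.total, hnull]
    have hmem : (fun ω => g ω - f ω) ∈ BddFun Ω := by
      refine ⟨cg + cf, fun ω => ?_⟩
      have := abs_sub_abs_le_abs_sub (g ω) (f ω)
      have h1 := abs_sub (g ω) (f ω)
      calc |g ω - f ω| ≤ |g ω| + |f ω| := abs_sub _ _
        _ ≤ cg + cf := add_le_add (hcg ω) (hcf ω)
    calc pCover P (fun ω => g ω - f ω) ≤ coverVal P l := pCover_le P hmem l hcov
      _ = δ := hval
      _ = 0 + δ := by ring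
  have h2 := pCover_subadd P (f := fun ω => g ω - f ω) (g := f) ?_ ⟨cf, hcf⟩
  · have he : (fun ω => (fun ω => g ω - f ω) ω + f ω) = g := funext fun ω => by simp
    rw [he] at h2
    linarith
  · refine ⟨cg + cf, fun ω => ?_⟩
    calc |g ω - f ω| ≤ |g ω| + |f ω| := abs_sub _ _
      _ ≤ cg + cf := add_le_add (hcg ω) (hcf ω)

theorem pCover_pos {f : Ω → ℝ} (hf : f ∈ BddFun Ω) (hgt : R.gt f 0) : 0 < pCover P f := by
  obtain ⟨hge, hnge⟩ := hgt
  obtain ⟨c, hc⟩ := hf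
  have hB : ∃ t : ℝ, 0 < t ∧ 0 < P.meas {ω | t < f ω} := by
    by_contra hcon
    push_neg at hcon
    apply hnge
    refine (hrep 0 f).mpr ((rep_sInf_iff P 0 f).mpr ?_)
    intro ε hε
    have h0 : P.meas {ω | ε/2 < f ω} = 0 :=
      le_antisymm (hcon _ (half_pos hε)) (P.nonneg _)
    have hsub : {ω | f ω - ε < (0:Ω→ℝ) ω}ᶜ ⊆ {ω | ε/2 < f ω} := by
      intro ω hω
      simp only [Set.mem_compl_iff, Set.mem_setOf_eq, Pi.zero_apply, not_lt] at hω ⊢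
      linarith
    have h1 := P.measMono hsub
    rw [P.measCompl, h0] at h1
    have h2 := P.measLeOne {ω | f ω - ε < (0:Ω→ℝ) ω}
    linarith
  obtain ⟨t, ht, hPB⟩ := hB
  have key : ∀ δ : ℝ, 0 < δ → t * P.meas {ω | t < f ω} ≤ pCover P f + δ := by
    intro δ hδ
    have hnull : P.meas {ω | f ω ≤ (0:Ω→ℝ) ω - δ} = 0 :=
      (rep_null_iff R P hrep _).mpr (R.neg_of_ge hge hδ)
    set B := {ω | t < f ω} with hB'
    set A := {ω | f ω ≤ (0:Ω→ℝ) ω - δ} with hA'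
    set l : List (ℝ × Set Ω) := [(-t, B), (c, A), (δ, Set.univ)] with hl
    have hcov : ∀ ω, - f ω ≤ coverFun l ω := by
      intro ω
      rw [hl, coverFun_cons, coverFun_cons, coverFun_cons, coverFun_nil]
      have hu : ind (Set.univ : Set Ω) ω = 1 := by simp [ind]
      rw [hu]
      by_cases hωB : ω ∈ B <;> by_cases hωA : ω ∈ A
      · exfalso
        have h1 : t < f ω := hωB
        have h2 : f ω ≤ (0:Ω→ℝ) ω - δ := hωA
        simp only [Pi.zero_apply] at h2
        linarith
      · have h1 : t < f ω := hωB
        rw [ind_of_mem hωB, ind_of_not_mem hωA]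
        show - f ω ≤ -t * 1 + (c * 0 + (δ * 1 + 0))
        linarith
      · have h2 : f ω ≤ (0:Ω→ℝ) ω - δ := hωA
        have h3 := neg_le_of_abs_le (hc ω)
        have h4 := le_of_abs_le (hc ω)
        rw [ind_of_mem hωA, ind_of_not_mem hωB]
        show - f ω ≤ -t * 0 + (c * 1 + (δ * 1 + 0))
        linarith
      · have h1 : ¬ t < f ω := hωB
        have h2 : ¬ f ω ≤ (0:Ω→ℝ) ω - δ := hωA
        simp only [Pi.zero_apply, not_le] at h2
        rw [ind_of_not_mem hωA, ind_of_not_mem hωB]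
        show - f ω ≤ -t * 0 + (c * 0 + (δ * 1 + 0))
        linarith
    have hval : coverVal P l = - t * P.meas B + δ := by
      rw [hl]
      simp [coverVal, P.total, hnull]
    have h5 := pCover_le P (BddFun.neg ⟨c, hc⟩) l hcov
    rw [hval] at h5
    have h6 := pCover_subadd P (f := f) (g := fun ω => - f ω) ⟨c, hc⟩ (BddFun.neg ⟨c, hc⟩)
    have he : (fun ω => f ω + (fun ω => - f ω) ω) = (fun _ : Ω => (0:ℝ)) := funext fun ω => by
      simp
    rw [he, pCover_zero] at h6
    linarith
  have h7 : t * P.meas {ω | t < f ω} ≤ pCover P f := by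
    refine le_of_forall_pos_le_add ?_
    intro δ hδ
    exact key δ hδ
  have h8 : 0 < t * P.meas {ω | t < f ω} := mul_pos ht hPB
  linarith

omit hrep in
theorem marketPower_pCover : marketPower (pCover P) = 0 := by
  unfold marketPower
  have hset : {r : ℝ | ∃ (N : ℕ) (f : Fin N → Ω → ℝ),
      (∀ i, ∀ ω, 0 ≤ f i ω) ∧ (∀ i, ∃ c : ℝ, ∀ ω, f i ω ≤ c) ∧
      r = ((∑ i, pCover P (f i)) - pCover P (fun ω => ∑ i, f i ω)) / (∑ i, pCover P (f i))}
      = {0} := by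
    ext r
    simp only [Set.mem_setOf_eq, Set.mem_singleton_iff]
    constructor
    · rintro ⟨N, f, hpos, hbdd, rfl⟩
      have hmem : ∀ i, f i ∈ BddFun Ω := by
        intro i
        obtain ⟨c, hc⟩ := hbdd i
        exact ⟨c, fun ω => by rw [abs_of_nonneg (hpos i ω)]; exact hc ω⟩
      rw [pCover_finSum P N f hmem, sub_self, zero_div]
    · rintro rfl
      refine ⟨0, Fin.elim0, (fun i => i.elim0), (fun i => i.elim0), ?_⟩
      simp
  rw [hset, csSup_singleton]

theorem forward_dir :
    Robust R ∧ ∃ ρ : (Ω → ℝ) → ℝ, IsPriceFun R (BddFun Ω) ρ ∧ marketPower ρ < 1 := by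
  refine ⟨rep_robust R P hrep, pCover P, ⟨⟨?_, ?_, ?_, ?_⟩, ?_⟩, ?_⟩
  · intro f hf lam hlam _
    exact pCover_smul P hf hlam
  · intro f hf g hg _
    exact pCover_subadd P hf hg
  · show pCover P (fun _ => (1:ℝ)) = 1
    exact pCover_const P 1
  · intro f hf g hg hge
    exact pCover_mono R P hrep hf hg hge
  · intro f hf hgt
    exact pCover_pos R P hrep hf hgt
  · rw [marketPower_pCover P]
    norm_num

end Forward
end Part5
section Part6
open Set

variable {Ω : Type*}

theorem BddFun.ind_mem (A : Set Ω) : ind A ∈ BddFun Ω :=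
  ⟨1, fun ω => by rw [abs_of_nonneg (ind_nonneg A ω)]; exact ind_le_one A ω⟩

theorem BddFun.zero_mem : (fun _ : Ω => (0:ℝ)) ∈ BddFun Ω := ⟨0, fun ω => by simp⟩

section RhoFacts

variable {R : Rationality Ω} {ρ : (Ω → ℝ) → ℝ} (hρ : IsPriceFun R (BddFun Ω) ρ)
include hρ

theorem rho_zero : ρ (fun _ : Ω => (0:ℝ)) = 0 := by
  have h := hρ.posHom (fun _ => (0:ℝ)) BddFun.zero_mem 2 (by norm_num) ?_
  · have he : (fun ω : Ω => 2 * (fun _ : Ω => (0:ℝ)) ω) = (fun _ : Ω => (0:ℝ)) := by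
      funext ω; simp
    rw [he] at h
    linarith
  · have he : (fun ω : Ω => 2 * (fun _ : Ω => (0:ℝ)) ω) = (fun _ : Ω => (0:ℝ)) := by
      funext ω; simp
    rw [he]; exact BddFun.zero_mem

theorem rho_mono_ptwise {f g : Ω → ℝ} (hf : f ∈ BddFun Ω) (hg : g ∈ BddFun Ω)
    (h : ∀ ω, g ω ≤ f ω) : ρ g ≤ ρ f :=
  hρ.mono f hf g hg (R.ge_of_le f g h)

theorem rho_nonneg {f : Ω → ℝ} (hf : f ∈ BddFun Ω) (h : ∀ ω, 0 ≤ f ω) : 0 ≤ ρ f := by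
  have := rho_mono_ptwise hρ hf BddFun.zero_mem h
  rw [rho_zero hρ] at this
  exact this

theorem rho_nonpos {f : Ω → ℝ} (hf : f ∈ BddFun Ω) (h : ∀ ω, f ω ≤ 0) : ρ f ≤ 0 := by
  have := rho_mono_ptwise hρ BddFun.zero_mem hf h
  rw [rho_zero hρ] at this
  exact this

theorem rho_ind_nonneg (A : Set Ω) : 0 ≤ ρ (ind A) :=
  rho_nonneg hρ (BddFun.ind_mem A) (ind_nonneg A)

theorem rho_smul_ind {c : ℝ} (hc : 0 ≤ c) (A : Set Ω) :
    ρ (fun ω => c * ind A ω) = c * ρ (ind A) := by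
  rcases eq_or_lt_of_le hc with hc0 | hc0
  · have he : (fun ω => c * ind A ω) = (fun _ : Ω => (0:ℝ)) := by
      funext ω; rw [← hc0]; ring
    rw [he, rho_zero hρ, ← hc0, zero_mul]
  · exact hρ.posHom (ind A) (BddFun.ind_mem A) c hc0 (BddFun.smul (BddFun.ind_mem A) c)

theorem rho_sub_lower {f u : Ω → ℝ} (hf : f ∈ BddFun Ω) (hu : u ∈ BddFun Ω) :
    ρ u ≤ ρ (fun ω => u ω + f ω) + ρ (fun ω => - f ω) := by
  have h := hρ.subadd (fun ω => u ω + f ω) (BddFun.add hu hf) (fun ω => - f ω)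
    (BddFun.neg hf) ?_
  · have he : (fun ω => (fun ω => u ω + f ω) ω + (fun ω => - f ω) ω) = u := by
      funext ω; simp
    rw [he] at h
    exact h
  · have he : (fun ω => (fun ω => u ω + f ω) ω + (fun ω => - f ω) ω) = u := by
      funext ω; simp
    rw [he]; exact hu

end RhoFacts

section Market

variable {R : Rationality Ω} {ρ : (Ω → ℝ) → ℝ} (hρ : IsPriceFun R (BddFun Ω) ρ)

/-- the set whose supremum defines the market power. -/
def mpSet (ρ : (Ω → ℝ) → ℝ) : Set ℝ :=
  {r | ∃ (N : ℕ) (f : Fin N → Ω → ℝ),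
    (∀ i, ∀ ω, 0 ≤ f i ω) ∧ (∀ i, ∃ c : ℝ, ∀ ω, f i ω ≤ c) ∧
    r = ((∑ i, ρ (f i)) - ρ (fun ω => ∑ i, f i ω)) / (∑ i, ρ (f i))}

theorem marketPower_eq (ρ : (Ω → ℝ) → ℝ) : marketPower ρ = sSup (mpSet ρ) := rfl

theorem mpSet_zero_mem (ρ : (Ω → ℝ) → ℝ) : (0:ℝ) ∈ mpSet ρ := by
  refine ⟨0, Fin.elim0, (fun i => i.elim0), (fun i => i.elim0), ?_⟩
  simp

include hρ

theorem mp_mem_bdd {N : ℕ} {f : Fin N → Ω → ℝ} (hpos : ∀ i : Fin N, ∀ ω, 0 ≤ f i ω)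
    (hbdd : ∀ i, ∃ c : ℝ, ∀ ω, f i ω ≤ c) (i : Fin N) : f i ∈ BddFun Ω := by
  obtain ⟨c, hc⟩ := hbdd i
  exact ⟨c, fun ω => by rw [abs_of_nonneg (hpos i ω)]; exact hc ω⟩

theorem mpSet_bddAbove : BddAbove (mpSet ρ) := by
  refine ⟨1, ?_⟩
  rintro r ⟨N, f, hpos, hbdd, rfl⟩
  have hmem : ∀ i, f i ∈ BddFun Ω := mp_mem_bdd hρ hpos hbdd
  have hS : 0 ≤ ∑ i, ρ (f i) :=
    Finset.sum_nonneg (fun i _ => rho_nonneg hρ (hmem i) (hpos i))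
  have hSig : 0 ≤ ρ (fun ω => ∑ i, f i ω) := by
    refine rho_nonneg hρ (BddFun.finSum N f hmem) ?_
    intro ω
    exact Finset.sum_nonneg (fun i _ => hpos i ω)
  rcases eq_or_lt_of_le hS with h0 | h0
  · rw [← h0, div_zero]; norm_num
  · rw [div_le_one h0]
    linarith

theorem mp_nonneg : 0 ≤ marketPower ρ := by
  rw [marketPower_eq]
  exact le_csSup (mpSet_bddAbove hρ) (mpSet_zero_mem ρ)

theorem market_key (N : ℕ) (f : Fin N → Ω → ℝ) (hpos : ∀ i, ∀ ω, 0 ≤ f i ω)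
    (hbdd : ∀ i, ∃ c : ℝ, ∀ ω, f i ω ≤ c) :
    (1 - marketPower ρ) * ∑ i, ρ (f i) ≤ ρ (fun ω => ∑ i, f i ω) := by
  have hmem : ∀ i, f i ∈ BddFun Ω := mp_mem_bdd hρ hpos hbdd
  have hS : 0 ≤ ∑ i, ρ (f i) :=
    Finset.sum_nonneg (fun i _ => rho_nonneg hρ (hmem i) (hpos i))
  have hSig : 0 ≤ ρ (fun ω => ∑ i, f i ω) := by
    refine rho_nonneg hρ (BddFun.finSum N f hmem) ?_
    intro ω
    exact Finset.sum_nonneg (fun i _ => hpos i ω)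
  rcases eq_or_lt_of_le hS with h0 | h0
  · rw [← h0, mul_zero]
    exact hSig
  · have hr : ((∑ i, ρ (f i)) - ρ (fun ω => ∑ i, f i ω)) / (∑ i, ρ (f i)) ≤ marketPower ρ := by
      rw [marketPower_eq]
      exact le_csSup (mpSet_bddAbove hρ) ⟨N, f, hpos, hbdd, rfl⟩
    rw [div_le_iff₀ h0] at hr
    nlinarith

end Market
end Part6
section Part7
open Set

variable {Ω : Type*}

/-- total mass of a cover list. -/
def listMass (l : List (ℝ × Set Ω)) : ℝ := (l.map Prod.fst).sum

theorem listMass_append (l₁ l₂ : List (ℝ × Set Ω)) :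
    listMass (l₁ ++ l₂) = listMass l₁ + listMass l₂ := by
  simp [listMass]

theorem listMass_smul (c : ℝ) (l : List (ℝ × Set Ω)) :
    listMass (l.map fun p => (c * p.1, p.2)) = c * listMass l := by
  induction l with
  | nil => simp [listMass]
  | cons p t ih =>
    simp only [listMass, List.map_cons, List.sum_cons] at ih ⊢
    rw [ih]; ring

theorem listMass_nonneg {l : List (ℝ × Set Ω)} (h : ∀ p ∈ l, 0 ≤ p.1) : 0 ≤ listMass l := by
  induction l with
  | nil => simp [listMass]
  | cons p t ih =>
    simp only [listMass, List.map_cons, List.sum_cons]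
    have h1 := h p List.mem_cons_self
    have h2 := ih (fun q hq => h q (List.mem_cons_of_mem p hq))
    simp only [listMass] at h2
    linarith

theorem coverFun_bddFun (l : List (ℝ × Set Ω)) : coverFun l ∈ BddFun Ω := by
  induction l with
  | nil => exact ⟨0, fun ω => by rw [coverFun_nil]; simp⟩
  | cons p t ih =>
    obtain ⟨c, hc⟩ := ih
    refine ⟨|p.1| + c, fun ω => ?_⟩
    rw [coverFun_cons]
    calc |p.1 * ind p.2 ω + coverFun t ω| ≤ |p.1 * ind p.2 ω| + |coverFun t ω| := abs_add_le _ _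
      _ ≤ |p.1| + c := by
          refine add_le_add ?_ (hc ω)
          rw [abs_mul]
          calc |p.1| * |ind p.2 ω| ≤ |p.1| * 1 := by
                refine mul_le_mul_of_nonneg_left ?_ (abs_nonneg _)
                rw [abs_of_nonneg (ind_nonneg _ ω)]
                exact ind_le_one _ ω
            _ = |p.1| := mul_one _

section QFun

variable {R : Rationality Ω} {ρ : (Ω → ℝ) → ℝ} (hρ : IsPriceFun R (BddFun Ω) ρ)
  (hm : marketPower ρ < 1)

/-- admissibility of a cover list at level `δ`. -/
def OkList (ρ : (Ω → ℝ) → ℝ) (δ : ℝ) (l : List (ℝ × Set Ω)) : Prop :=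
  ∀ p ∈ l, 0 ≤ p.1 ∧ δ ≤ ρ (ind p.2)

/-- the sublinear penalised functional at level `δ`. -/
noncomputable def qSet (ρ : (Ω → ℝ) → ℝ) (m δ : ℝ) (x : Ω → ℝ) : Set ℝ :=
  {y | ∃ l : List (ℝ × Set Ω), OkList ρ δ l ∧
    y = (1-m)⁻¹ * ρ (fun ω => x ω + coverFun l ω) - δ * listMass l}

noncomputable def qF (ρ : (Ω → ℝ) → ℝ) (m δ : ℝ) (x : Ω → ℝ) : ℝ :=
  sInf (qSet ρ m δ x)

include hρ hm

theorem qSet_mem_nil {x : Ω → ℝ} :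
    (1 - marketPower ρ)⁻¹ * ρ x ∈ qSet ρ (marketPower ρ) δ x := by
  refine ⟨[], fun p hp => absurd hp List.not_mem_nil, ?_⟩
  have he : (fun ω => x ω + coverFun ([] : List (ℝ × Set Ω)) ω) = x := by
    funext ω; rw [coverFun_nil]; ring
  rw [he]
  simp [listMass]

theorem list_market {δ : ℝ} (hδ : 0 < δ) {l : List (ℝ × Set Ω)} (hok : OkList ρ δ l) :
    (1 - marketPower ρ) * (δ * listMass l) ≤ ρ (coverFun l) := by
  set N := l.length with hN
  set F : Fin N → Ω → ℝ := fun i ω => (l.get i).1 * ind (l.get i).2 ω with hF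
  have hpos : ∀ i, ∀ ω, 0 ≤ F i ω := by
    intro i ω
    exact mul_nonneg (hok _ (l.get_mem i)).1 (ind_nonneg _ ω)
  have hbdd : ∀ i, ∃ c : ℝ, ∀ ω, F i ω ≤ c := by
    intro i
    refine ⟨(l.get i).1, fun ω => ?_⟩
    calc (l.get i).1 * ind (l.get i).2 ω ≤ (l.get i).1 * 1 :=
          mul_le_mul_of_nonneg_left (ind_le_one _ ω) (hok _ (l.get_mem i)).1
      _ = (l.get i).1 := mul_one _
  have hsum : coverFun l = fun ω => ∑ i, F i ω := by
    funext ω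
    rw [show coverFun l ω = (l.map fun p => p.1 * ind p.2 ω).sum from rfl,
      list_sum_map_get l (fun p => p.1 * ind p.2 ω)]
  have hkey := market_key hρ N F hpos hbdd
  have hFi : ∀ i, δ * (l.get i).1 ≤ ρ (F i) := by
    intro i
    have := rho_smul_ind hρ (hok _ (l.get_mem i)).1 (l.get i).2
    rw [hF]
    simp only
    rw [this]
    have h1 := (hok _ (l.get_mem i)).2
    have h2 := (hok _ (l.get_mem i)).1
    calc δ * (l.get i).1 = (l.get i).1 * δ := by ring
      _ ≤ (l.get i).1 * ρ (ind (l.get i).2) := mul_le_mul_of_nonneg_left h1 h2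
      _ = (l.get i).1 * ρ (ind (l.get i).2) := rfl
  have hmass : listMass l = ∑ i, (l.get i).1 := list_sum_map_get l Prod.fst
  have h3 : δ * listMass l ≤ ∑ i, ρ (F i) := by
    rw [hmass, Finset.mul_sum]
    exact Finset.sum_le_sum (fun i _ => hFi i)
  have h4 : (1 - marketPower ρ) * (δ * listMass l) ≤ (1 - marketPower ρ) * ∑ i, ρ (F i) :=
    mul_le_mul_of_nonneg_left h3 (by linarith)
  rw [hsum]
  exact h4.trans hkey

theorem qSet_lower {δ : ℝ} (hδ : 0 < δ) {x : Ω → ℝ} (hx : x ∈ BddFun Ω) :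
    ∀ y ∈ qSet ρ (marketPower ρ) δ x,
    -((1 - marketPower ρ)⁻¹ * ρ (fun ω => - x ω)) ≤ y := by
  rintro y ⟨l, hok, rfl⟩
  set m := marketPower ρ with hmdef
  have hm1 : 0 < 1 - m := by linarith
  have h1 : ρ (coverFun l) ≤ ρ (fun ω => x ω + coverFun l ω) + ρ (fun ω => - x ω) := by
    have := rho_sub_lower hρ hx (coverFun_bddFun l)
    have he : (fun ω => coverFun l ω + x ω) = (fun ω => x ω + coverFun l ω) := by
      funext ω; ring
    rwa [he] at this
  have h2 := list_market hρ hm hδ hok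
  have h3 : (1-m) * (δ * listMass l) - ρ (fun ω => - x ω) ≤ ρ (fun ω => x ω + coverFun l ω) := by
    linarith
  have h4 := mul_le_mul_of_nonneg_left h3 (le_of_lt (inv_pos.mpr hm1))
  calc -((1-m)⁻¹ * ρ (fun ω => - x ω))
      = (1-m)⁻¹ * ((1-m) * (δ * listMass l) - ρ (fun ω => - x ω)) - δ * listMass l := by
        rw [mul_sub, ← mul_assoc, inv_mul_cancel₀ (ne_of_gt hm1), one_mul]
        ring
    _ ≤ (1-m)⁻¹ * ρ (fun ω => x ω + coverFun l ω) - δ * listMass l := by linarith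

theorem qSet_bddBelow {δ : ℝ} (hδ : 0 < δ) {x : Ω → ℝ} (hx : x ∈ BddFun Ω) :
    BddBelow (qSet ρ (marketPower ρ) δ x) :=
  ⟨-((1 - marketPower ρ)⁻¹ * ρ (fun ω => - x ω)), fun y hy => qSet_lower hρ hm hδ hx y hy⟩

theorem qF_le_rho {δ : ℝ} (hδ : 0 < δ) {x : Ω → ℝ} (hx : x ∈ BddFun Ω) :
    qF ρ (marketPower ρ) δ x ≤ (1 - marketPower ρ)⁻¹ * ρ x :=
  csInf_le (qSet_bddBelow hρ hm hδ hx) (qSet_mem_nil hρ hm)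

theorem qF_lower {δ : ℝ} (hδ : 0 < δ) {x : Ω → ℝ} (hx : x ∈ BddFun Ω) :
    -((1 - marketPower ρ)⁻¹ * ρ (fun ω => - x ω)) ≤ qF ρ (marketPower ρ) δ x :=
  le_csInf ⟨_, qSet_mem_nil hρ hm⟩ (fun y hy => qSet_lower hρ hm hδ hx y hy)

theorem qF_exists {δ : ℝ} (hδ : 0 < δ) {x : Ω → ℝ} (hx : x ∈ BddFun Ω) {ε : ℝ} (hε : 0 < ε) :
    ∃ l : List (ℝ × Set Ω), OkList ρ δ l ∧
      (1 - marketPower ρ)⁻¹ * ρ (fun ω => x ω + coverFun l ω) - δ * listMass l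
        < qF ρ (marketPower ρ) δ x + ε := by
  have h := (csInf_lt_iff (qSet_bddBelow hρ hm hδ hx) ⟨_, qSet_mem_nil hρ hm⟩).mp
    (show qF ρ (marketPower ρ) δ x < qF ρ (marketPower ρ) δ x + ε by linarith)
  obtain ⟨y, ⟨l, hok, rfl⟩, hy⟩ := h
  exact ⟨l, hok, hy⟩

theorem qF_subadd {δ : ℝ} (hδ : 0 < δ) {x y : Ω → ℝ} (hx : x ∈ BddFun Ω) (hy : y ∈ BddFun Ω) :
    qF ρ (marketPower ρ) δ (fun ω => x ω + y ω)
      ≤ qF ρ (marketPower ρ) δ x + qF ρ (marketPower ρ) δ y := by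
  set m := marketPower ρ with hmdef
  refine le_of_forall_pos_le_add ?_
  intro ε hε
  obtain ⟨l₁, hok₁, hv₁⟩ := qF_exists hρ hm hδ hx (half_pos hε)
  obtain ⟨l₂, hok₂, hv₂⟩ := qF_exists hρ hm hδ hy (half_pos hε)
  have hok : OkList ρ δ (l₁ ++ l₂) := by
    intro p hp
    rcases List.mem_append.mp hp with h | h
    · exact hok₁ p h
    · exact hok₂ p h
  have hmem : ((1-m)⁻¹ * ρ (fun ω => (fun ω => x ω + y ω) ω + coverFun (l₁ ++ l₂) ω)
      - δ * listMass (l₁ ++ l₂)) ∈ qSet ρ m δ (fun ω => x ω + y ω) := ⟨l₁ ++ l₂, hok, rfl⟩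
  have hle := csInf_le (qSet_bddBelow hρ hm hδ (BddFun.add hx hy)) hmem
  have hsub : ρ (fun ω => (fun ω => x ω + y ω) ω + coverFun (l₁ ++ l₂) ω)
      ≤ ρ (fun ω => x ω + coverFun l₁ ω) + ρ (fun ω => y ω + coverFun l₂ ω) := by
    have h := hρ.subadd (fun ω => x ω + coverFun l₁ ω) (BddFun.add hx (coverFun_bddFun l₁))
      (fun ω => y ω + coverFun l₂ ω) (BddFun.add hy (coverFun_bddFun l₂)) ?_
    · have he : (fun ω => (fun ω => x ω + coverFun l₁ ω) ω + (fun ω => y ω + coverFun l₂ ω) ω)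
          = (fun ω => (fun ω => x ω + y ω) ω + coverFun (l₁ ++ l₂) ω) := by
        funext ω
        simp only [coverFun_append]
        ring
      rwa [he] at h
    · have hb := BddFun.add (BddFun.add hx (coverFun_bddFun l₁))
        (BddFun.add hy (coverFun_bddFun l₂))
      exact hb
  have hm1 : (0:ℝ) < 1 - m := by rw [hmdef]; linarith
  have h5 := mul_le_mul_of_nonneg_left hsub (le_of_lt (inv_pos.mpr hm1))
  rw [listMass_append] at hle
  calc qF ρ m δ (fun ω => x ω + y ω)
      ≤ (1-m)⁻¹ * ρ (fun ω => (fun ω => x ω + y ω) ω + coverFun (l₁ ++ l₂) ω)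
        - δ * (listMass l₁ + listMass l₂) := hle
    _ ≤ ((1-m)⁻¹ * ρ (fun ω => x ω + coverFun l₁ ω) - δ * listMass l₁)
        + ((1-m)⁻¹ * ρ (fun ω => y ω + coverFun l₂ ω) - δ * listMass l₂) := by linarith
    _ ≤ qF ρ m δ x + qF ρ m δ y + ε := by linarith

theorem qF_smul_le {δ : ℝ} (hδ : 0 < δ) {x : Ω → ℝ} (hx : x ∈ BddFun Ω) {c : ℝ} (hc : 0 < c) :
    qF ρ (marketPower ρ) δ (fun ω => c * x ω) ≤ c * qF ρ (marketPower ρ) δ x := by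
  set m := marketPower ρ with hmdef
  refine le_of_forall_pos_le_add ?_
  intro ε hε
  obtain ⟨l, hok, hv⟩ := qF_exists hρ hm hδ hx (div_pos hε hc)
  set l' := l.map fun p => (c * p.1, p.2) with hl'
  have hok' : OkList ρ δ l' := by
    intro p hp
    rw [hl', List.mem_map] at hp
    obtain ⟨q, hq, rfl⟩ := hp
    exact ⟨mul_nonneg hc.le (hok q hq).1, (hok q hq).2⟩
  have hmem : ((1-m)⁻¹ * ρ (fun ω => (fun ω => c * x ω) ω + coverFun l' ω)
      - δ * listMass l') ∈ qSet ρ m δ (fun ω => c * x ω) := ⟨l', hok', rfl⟩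
  have hle := csInf_le (qSet_bddBelow hρ hm hδ (BddFun.smul hx c)) hmem
  have hρc : ρ (fun ω => (fun ω => c * x ω) ω + coverFun l' ω)
      = c * ρ (fun ω => x ω + coverFun l ω) := by
    have he : (fun ω => (fun ω => c * x ω) ω + coverFun l' ω)
        = (fun ω => c * (fun ω => x ω + coverFun l ω) ω) := by
      funext ω
      rw [hl', coverFun_smul]
      simp only
      ring
    rw [he]
    exact hρ.posHom _ (BddFun.add hx (coverFun_bddFun l)) c hc
      (BddFun.smul (BddFun.add hx (coverFun_bddFun l)) c)
  rw [hρc, hl', listMass_smul] at hle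
  calc qF ρ m δ (fun ω => c * x ω)
      ≤ (1-m)⁻¹ * (c * ρ (fun ω => x ω + coverFun l ω)) - δ * (c * listMass l) := hle
    _ = c * ((1-m)⁻¹ * ρ (fun ω => x ω + coverFun l ω) - δ * listMass l) := by ring
    _ ≤ c * (qF ρ m δ x + ε / c) := by
        refine mul_le_mul_of_nonneg_left ?_ hc.le
        linarith
    _ = c * qF ρ m δ x + ε := by field_simp

theorem qF_smul {δ : ℝ} (hδ : 0 < δ) {x : Ω → ℝ} (hx : x ∈ BddFun Ω) {c : ℝ} (hc : 0 < c) :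
    qF ρ (marketPower ρ) δ (fun ω => c * x ω) = c * qF ρ (marketPower ρ) δ x := by
  refine le_antisymm (qF_smul_le hρ hm hδ hx hc) ?_
  have h2 := qF_smul_le hρ hm hδ (BddFun.smul hx c) (inv_pos.mpr hc)
  have he : (fun ω => c⁻¹ * (fun ω => c * x ω) ω) = x := by
    funext ω
    simp only
    rw [← mul_assoc, inv_mul_cancel₀ (ne_of_gt hc), one_mul]
  rw [he] at h2
  calc c * qF ρ (marketPower ρ) δ x
      ≤ c * (c⁻¹ * qF ρ (marketPower ρ) δ (fun ω => c * x ω)) :=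
        mul_le_mul_of_nonneg_left h2 hc.le
    _ = qF ρ (marketPower ρ) δ (fun ω => c * x ω) := by
        rw [← mul_assoc, mul_inv_cancel₀ (ne_of_gt hc), one_mul]

theorem qF_zero_nonneg {δ : ℝ} (hδ : 0 < δ) : 0 ≤ qF ρ (marketPower ρ) δ (fun _ => (0:ℝ)) := by
  have h := qF_lower hρ hm hδ BddFun.zero_mem
  have he : (fun ω : Ω => - (fun _ : Ω => (0:ℝ)) ω) = (fun _ : Ω => (0:ℝ)) := by
    funext ω; simp
  rw [he, rho_zero hρ, mul_zero, neg_zero] at h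
  exact h

end QFun
end Part7
section Part8
open Set

variable {Ω : Type*}

/-- bounded functions as a submodule. -/
def bddSubmodule (Ω : Type*) : Submodule ℝ (Ω → ℝ) where
  carrier := BddFun Ω
  add_mem' := fun hf hg => BddFun.add hf hg
  zero_mem' := BddFun.zero_mem
  smul_mem' := fun c f hf => BddFun.smul hf c

section Backward

variable {R : Rationality Ω} {ρ : (Ω → ℝ) → ℝ} (hρ : IsPriceFun R (BddFun Ω) ρ)
  (hm : marketPower ρ < 1)

include hρ hm

theorem exists_L {δ : ℝ} (hδ : 0 < δ) : ∃ L : (bddSubmodule Ω) →ₗ[ℝ] ℝ,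
    ∀ x : (bddSubmodule Ω), L x ≤ qF ρ (marketPower ρ) δ x.val := by
  have hhom : ∀ c : ℝ, 0 < c → ∀ x : (bddSubmodule Ω),
      (fun x : (bddSubmodule Ω) => qF ρ (marketPower ρ) δ x.val) (c • x)
        = c * (fun x : (bddSubmodule Ω) => qF ρ (marketPower ρ) δ x.val) x := by
    intro c hc x
    exact qF_smul hρ hm hδ x.2 hc
  have hadd : ∀ x y : (bddSubmodule Ω),
      (fun x : (bddSubmodule Ω) => qF ρ (marketPower ρ) δ x.val) (x + y)
        ≤ (fun x : (bddSubmodule Ω) => qF ρ (marketPower ρ) δ x.val) x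
          + (fun x : (bddSubmodule Ω) => qF ρ (marketPower ρ) δ x.val) y := by
    intro x y
    exact qF_subadd hρ hm hδ x.2 y.2
  have hbot : ∀ x : ((⟨⊥, 0⟩ : (bddSubmodule Ω) →ₗ.[ℝ] ℝ)).domain,
      ((⟨⊥, 0⟩ : (bddSubmodule Ω) →ₗ.[ℝ] ℝ)) x
        ≤ (fun x : (bddSubmodule Ω) => qF ρ (marketPower ρ) δ x.val) x := by
    rintro ⟨x, hx⟩
    simp only [Submodule.mem_bot] at hx
    subst hx
    simpa using (show 0 ≤ qF ρ (marketPower ρ) δ 0 from qF_zero_nonneg hρ hm hδ)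
  obtain ⟨g, -, hg⟩ := exists_extension_of_le_sublinear
    (⟨⊥, 0⟩ : (bddSubmodule Ω) →ₗ.[ℝ] ℝ)
    (fun x : (bddSubmodule Ω) => qF ρ (marketPower ρ) δ x.val) hhom hadd hbot
  exact ⟨g, fun x => hg x⟩

theorem backward_dir (hR : Robust R) : ∃ P : FinAddProb Ω, Represents P R := by
  classical
  set δ : ℕ → ℝ := fun n => 1/((n:ℝ)+1) with hδdef
  have hδ : ∀ n, 0 < δ n := fun n => by positivity
  have hδ1 : ∀ n, δ n ≤ 1 := by
    intro n
    rw [hδdef]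
    simp only
    rw [div_le_one (by positivity)]
    have : (0:ℝ) ≤ (n:ℝ) := Nat.cast_nonneg n
    linarith
  have hm1 : (0:ℝ) < 1 - marketPower ρ := by linarith
  have hex : ∀ n : ℕ, ∃ L : (bddSubmodule Ω) →ₗ[ℝ] ℝ,
      ∀ x : (bddSubmodule Ω), L x ≤ qF ρ (marketPower ρ) (δ n) x.val :=
    fun n => exists_L hρ hm (hδ n)
  choose L hL using hex
  set indE : Set Ω → (bddSubmodule Ω) := fun A => ⟨ind A, BddFun.ind_mem A⟩ with hindE
  set μ : ℕ → Set Ω → ℝ := fun n A => L n (indE A) with hμdef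
  -- upper bound
  have hμ_le : ∀ n A, μ n A ≤ (1 - marketPower ρ)⁻¹ * ρ (ind A) :=
    fun n A => (hL n (indE A)).trans (qF_le_rho hρ hm (hδ n) (BddFun.ind_mem A))
  -- lower bounds
  have hμ_neg_le : ∀ n A, - μ n A ≤ qF ρ (marketPower ρ) (δ n) (fun ω => - ind A ω) := by
    intro n A
    have h1 := hL n (- indE A)
    rw [map_neg] at h1
    exact h1
  have hμ_nonneg : ∀ n A, 0 ≤ μ n A := by
    intro n A
    have h2 := (hμ_neg_le n A).trans
      (qF_le_rho hρ hm (hδ n) (BddFun.neg (BddFun.ind_mem A)))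
    have h3 : ρ (fun ω => - ind A ω) ≤ 0 :=
      rho_nonpos hρ (BddFun.neg (BddFun.ind_mem A))
        (fun ω => neg_nonpos.mpr (ind_nonneg A ω))
    have h4 : (1 - marketPower ρ)⁻¹ * ρ (fun ω => - ind A ω) ≤ 0 :=
      mul_nonpos_of_nonneg_of_nonpos (le_of_lt (inv_pos.mpr hm1)) h3
    linarith
  have hμ_ge : ∀ n A, δ n ≤ ρ (ind A) → δ n ≤ μ n A := by
    intro n A hA
    have hok : OkList ρ (δ n) [((1:ℝ), A)] := by
      intro p hp
      rcases List.mem_singleton.mp hp with rfl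
      exact ⟨zero_le_one, hA⟩
    have hmem : ((1 - marketPower ρ)⁻¹
        * ρ (fun ω => (fun ω => - ind A ω) ω + coverFun [((1:ℝ), A)] ω)
        - δ n * listMass [((1:ℝ), A)]) ∈ qSet ρ (marketPower ρ) (δ n) (fun ω => - ind A ω) :=
      ⟨[((1:ℝ), A)], hok, rfl⟩
    have hle := csInf_le (qSet_bddBelow hρ hm (hδ n) (BddFun.neg (BddFun.ind_mem A))) hmem
    have hval : (fun ω => (fun ω => - ind A ω) ω + coverFun [((1:ℝ), A)] ω)
        = (fun _ : Ω => (0:ℝ)) := by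
      funext ω
      rw [coverFun_cons, coverFun_nil]
      show - ind A ω + (1 * ind A ω + 0) = 0
      ring
    have hmass : listMass [((1:ℝ), A)] = 1 := by simp [listMass]
    rw [hval, rho_zero hρ, mul_zero, hmass, mul_one, zero_sub] at hle
    have h5 := (hμ_neg_le n A).trans hle
    linarith
  have hμ_add : ∀ n A B, Disjoint A B → μ n (A ∪ B) = μ n A + μ n B := by
    intro n A B hd
    have he : indE (A ∪ B) = indE A + indE B := by
      apply Subtype.ext
      show ind (A ∪ B) = ind A + ind B
      funext ω
      have := congrFun (Set.indicator_union_of_disjoint hd (fun _ => (1:ℝ))) ω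
      exact this
    rw [hμdef]
    simp only
    rw [he, map_add]
  have hμ_mono : ∀ n (A B : Set Ω), A ⊆ B → μ n A ≤ μ n B := by
    intro n A B hAB
    have hd : Disjoint A (B \ A) := by
      rw [Set.disjoint_left]
      rintro x hx ⟨-, hx2⟩
      exact hx2 hx
    have h1 := hμ_add n A (B \ A) hd
    rw [Set.union_diff_cancel hAB] at h1
    have := hμ_nonneg n (B \ A)
    linarith
  have hind_univ : ind (Set.univ : Set Ω) = (1 : Ω → ℝ) := by
    funext ω
    simp [ind]
  have hμu_pos : ∀ n, 0 < μ n Set.univ := by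
    intro n
    refine lt_of_lt_of_le (hδ n) (hμ_ge n Set.univ ?_)
    rw [hind_univ, hρ.norm_one]
    exact hδ1 n
  have hμu_le : ∀ n, μ n Set.univ ≤ (1 - marketPower ρ)⁻¹ := by
    intro n
    have := hμ_le n Set.univ
    rw [hind_univ, hρ.norm_one, mul_one] at this
    exact this
  set ν : ℕ → Set Ω → ℝ := fun n A => μ n A / μ n Set.univ with hνdef
  have hν_nonneg : ∀ n A, 0 ≤ ν n A := fun n A =>
    div_nonneg (hμ_nonneg n A) (hμu_pos n).le
  have hν_le_one : ∀ n A, ν n A ≤ 1 := by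
    intro n A
    rw [hνdef]
    simp only
    rw [div_le_one (hμu_pos n)]
    exact hμ_mono n A Set.univ (Set.subset_univ A)
  have hν_univ : ∀ n, ν n Set.univ = 1 := fun n => div_self (ne_of_gt (hμu_pos n))
  set w : ℕ → ℝ := fun n => (1/2:ℝ)^(n+1) with hwdef
  have hw_pos : ∀ n, 0 < w n := fun n => by positivity
  have hw_summable : Summable w := by
    have h1 : Summable (fun n : ℕ => (1/2:ℝ) * (1/2)^n) := summable_geometric_two.mul_left _
    refine h1.congr (fun n => ?_)
    rw [hwdef]
    simp only
    rw [pow_succ]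
    ring
  have hw_sum : ∑' n, w n = 1 := by
    have h1 : ∀ n : ℕ, w n = 1/2/2^n := by
      intro n
      rw [hwdef]
      simp only
      rw [one_div_pow, pow_succ, div_div]
      congr 1
      ring
    calc ∑' n, w n = ∑' n, (1/2:ℝ)/2^n := by
          exact tsum_congr h1
      _ = 1 := tsum_geometric_two' 1
  have hsummable : ∀ A : Set Ω, Summable (fun n => w n * ν n A) := by
    intro A
    refine Summable.of_nonneg_of_le (fun n => mul_nonneg (hw_pos n).le (hν_nonneg n A))
      (fun n => ?_) hw_summable
    calc w n * ν n A ≤ w n * 1 := mul_le_mul_of_nonneg_left (hν_le_one n A) (hw_pos n).le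
      _ = w n := mul_one _
  set Pm : Set Ω → ℝ := fun A => ∑' n, w n * ν n A with hPmdef
  have hPm_nonneg : ∀ A, 0 ≤ Pm A := fun A =>
    tsum_nonneg (fun n => mul_nonneg (hw_pos n).le (hν_nonneg n A))
  have hPm_total : Pm Set.univ = 1 := by
    rw [hPmdef]
    simp only
    calc ∑' n, w n * ν n Set.univ = ∑' n, w n := by
          refine tsum_congr (fun n => ?_)
          rw [hν_univ n, mul_one]
      _ = 1 := hw_sum
  have hPm_add : ∀ A B, Disjoint A B → Pm (A ∪ B) = Pm A + Pm B := by
    intro A B hd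
    rw [hPmdef]
    simp only
    calc ∑' n, w n * ν n (A ∪ B) = ∑' n, (w n * ν n A + w n * ν n B) := by
          refine tsum_congr (fun n => ?_)
          rw [hνdef]
          simp only
          rw [hμ_add n A B hd, add_div, mul_add]
      _ = (∑' n, w n * ν n A) + ∑' n, w n * ν n B :=
          (hsummable A).tsum_add (hsummable B)
  -- the two crucial properties
  have hPm_null : ∀ A : Set Ω, R.Negligible A → Pm A = 0 := by
    intro A hA
    have hρA : ρ (ind A) ≤ 0 := by
      have hge : R.ge (fun _ : Ω => (0:ℝ)) (ind A) := hA
      have := hρ.mono (fun _ : Ω => (0:ℝ)) BddFun.zero_mem (ind A) (BddFun.ind_mem A) hge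
      rw [rho_zero hρ] at this
      exact this
    have hμ0 : ∀ n, μ n A = 0 := by
      intro n
      refine le_antisymm ?_ (hμ_nonneg n A)
      refine (hμ_le n A).trans ?_
      exact mul_nonpos_of_nonneg_of_nonpos (le_of_lt (inv_pos.mpr hm1)) hρA
    rw [hPmdef]
    simp only
    have he : (fun n => w n * ν n A) = (fun _ => (0:ℝ)) := by
      funext n
      rw [hνdef]
      simp only
      rw [hμ0 n, zero_div, mul_zero]
    rw [he]
    exact tsum_zero
  have hPm_pos : ∀ A : Set Ω, ¬ R.Negligible A → 0 < Pm A := by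
    intro A hA
    have hgt : R.gt (ind A) 0 := by
      refine ⟨R.ge_of_le _ _ (fun ω => ?_), hA⟩
      show (0:Ω→ℝ) ω ≤ ind A ω
      simpa using ind_nonneg A ω
    have hρA : 0 < ρ (ind A) := hρ.arbFree (ind A) (BddFun.ind_mem A) hgt
    obtain ⟨n, hn⟩ := exists_nat_one_div_lt hρA
    have hδn : δ n ≤ ρ (ind A) := le_of_lt hn
    have hν_ge : δ n * (1 - marketPower ρ) ≤ ν n A := by
      rw [hνdef]
      simp only
      rw [le_div_iff₀ (hμu_pos n)]
      have h4 : δ n * (1 - marketPower ρ) * μ n Set.univ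
          ≤ δ n * (1 - marketPower ρ) * (1 - marketPower ρ)⁻¹ :=
        mul_le_mul_of_nonneg_left (hμu_le n) (mul_nonneg (hδ n).le hm1.le)
      have h5 : δ n * (1 - marketPower ρ) * (1 - marketPower ρ)⁻¹ = δ n := by
        rw [mul_assoc, mul_inv_cancel₀ (ne_of_gt hm1), mul_one]
      have h6 := hμ_ge n A hδn
      linarith
    have hterm : 0 < w n * ν n A := by
      refine mul_pos (hw_pos n) ?_
      refine lt_of_lt_of_le ?_ hν_ge
      exact mul_pos (hδ n) hm1
    refine lt_of_lt_of_le hterm ?_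
    exact (hsummable A).le_tsum n (fun i _ => mul_nonneg (hw_pos i).le (hν_nonneg i A))
  -- assemble the finitely additive probability
  refine ⟨⟨Pm, hPm_nonneg, hPm_total, hPm_add⟩, ?_⟩
  intro f h
  have hP : ∀ A : Set Ω, (⟨Pm, hPm_nonneg, hPm_total, hPm_add⟩ : FinAddProb Ω).meas A = Pm A :=
    fun A => rfl
  rw [R.ge_iff_neg hR f h, rep_sInf_iff]
  constructor
  · intro hneg ε hε
    have h0 : Pm {ω | f ω ≤ h ω - ε} = 0 := hPm_null _ (hneg ε hε)
    have hc : {ω | h ω - ε < f ω} = {ω | f ω ≤ h ω - ε}ᶜ := by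
      ext ω
      simp [not_le]
    rw [hc, FinAddProb.measCompl, hP, h0]
    ring
  · intro hPall ε hε
    by_contra hneg
    have hpos := hPm_pos _ hneg
    have h1 := hPall ε hε
    have hc : {ω | h ω - ε < f ω} = {ω | f ω ≤ h ω - ε}ᶜ := by
      ext ω
      simp [not_le]
    rw [hc, FinAddProb.measCompl, hP] at h1
    linarith

end Backward
end Part8
/-- Theorem `th ge*` (a): `≥_*` is represented by some `P ∈ Prob(Ω)`
iff (a) `≥_*` is robust and (b) there exists `ρ ∈ Π(B(Ω))` with `𝓂(ρ) < 1`. -/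
theorem represented_iff_robust_and_price {Ω : Type*} (R : Rationality Ω) :
    (∃ P : FinAddProb Ω, Represents P R) ↔
    (Robust R ∧ ∃ ρ : (Ω → ℝ) → ℝ, IsPriceFun R (BddFun Ω) ρ ∧ marketPower ρ < 1) := by
  constructor
  · rintro ⟨P, hrep⟩
    exact forward_dir R P hrep
  · rintro ⟨hR, ρ, hρ, hm⟩
    exact backward_dir hρ hm hR
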